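/- arXiv:2304.12920 — 8 statements merged into one kernel-verified Lean document; each statement's English description precedes it below -/
import Mathlib

section
/- Let 0<α<1, λ⋆=(1−α)/√((1−α)²+α²), λ₁=2(1−α)²/(α(2−α)), and let α₁≈0.4825 be the unique real root of 7α⁴−20α³+24α²−16α+4=0 on (0,1). If f∈U(α,λ) and either (α∈[α₁,1) and 0<λ≤λ₁) or (α∈(0,α₁] and 0<λ≤λ⋆), then the second logarithmic coefficient satisfies |γ₂| ≤ λ/(2(2−α)). -/
open Complex Metric Set

/-- The class `U(α,λ)`: analytic functions on the unit disc of the form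
`f(z) = z + a₂z² + ⋯` satisfying `|(z/f(z))^(1+α) f'(z) - 1| < λ` there
(principal branch). -/
noncomputable def UClass (a l : ℝ) : Set (ℂ → ℂ) :=
  {f | AnalyticOnNhd ℂ f (ball 0 1) ∧ f 0 = 0 ∧ deriv f 0 = 1 ∧
    ∀ z ∈ ball (0:ℂ) 1, z ≠ 0 →
      ‖(z / f z) ^ ((1:ℂ) + (a:ℂ)) * deriv f z - 1‖ < l}

/-- `IsLogCoeff f γ` means the `γ n`, `n ≥ 1`, are the logarithmic coefficients
of `f`, i.e. `log (f z / z) = 2 ∑_{n≥1} γ n zⁿ` on the punctured unit disc. -/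
def IsLogCoeff (f : ℂ → ℂ) (γ : ℕ → ℂ) : Prop :=
  ∀ z ∈ ball (0:ℂ) 1, z ≠ 0 →
    HasSum (fun n : ℕ => 2 * γ (n + 1) * z ^ (n + 1)) (Complex.log (f z / z))

section aux
open FormalMultilinearSeries

lemma mob_key (w c : ℂ) : ‖1 - (starRingEnd ℂ) c * w‖^2 - ‖w - c‖^2
    = (1 - ‖w‖^2) * (1 - ‖c‖^2) := by
  simp only [Complex.sq_norm, Complex.normSq_apply,
    Complex.sub_re, Complex.sub_im, Complex.mul_re, Complex.mul_im,
    Complex.one_re, Complex.one_im, Complex.conj_re, Complex.conj_im]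
  ring

lemma schwarz_pick_zero (F : ℂ → ℂ) (hd : DifferentiableOn ℂ F (ball 0 1))
    (h0 : F 0 = 0) (hb : ∀ z ∈ ball (0:ℂ) 1, ‖F z‖ ≤ 1) :
    ‖deriv (dslope F 0) 0‖ ≤ 1 - ‖deriv F 0‖^2 := by
  set φ : ℂ → ℂ := dslope F 0 with hφ
  have hφd : DifferentiableOn ℂ φ (ball 0 1) :=
    (differentiableOn_dslope (ball_mem_nhds _ one_pos)).mpr hd
  have hφb : ∀ z ∈ ball (0:ℂ) 1, ‖φ z‖ ≤ 1 := by
    intro z hz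
    refine le_of_forall_pos_le_add (fun ε hε => ?_)
    have hmaps : MapsTo F (ball (0:ℂ) 1) (ball (F 0) (1 + ε)) := by
      intro w hw
      rw [h0, mem_ball_zero_iff]
      exact lt_of_le_of_lt (hb w hw) (by linarith)
    simpa [div_one] using Complex.norm_dslope_le_div_of_mapsTo_ball hd (hmaps.mono_right ball_subset_closedBall) hz
  have h01 : (0:ℂ) ∈ ball (0:ℂ) 1 := mem_ball_self one_pos
  have hc1 : φ 0 = deriv F 0 := dslope_same F 0
  set c₁ : ℂ := φ 0 with hc
  have hc1le : ‖c₁‖ ≤ 1 := hφb 0 h01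
  rcases lt_or_eq_of_le hc1le with hlt | heq
  · -- Möbius case
    set Dn : ℂ → ℂ := fun z => 1 - (starRingEnd ℂ) c₁ * φ z with hDn
    have hDnne : ∀ z ∈ ball (0:ℂ) 1, Dn z ≠ 0 := by
      intro z hz
      have : ‖(starRingEnd ℂ) c₁ * φ z‖ < 1 := by
        rw [norm_mul, RCLike.norm_conj]
        calc ‖c₁‖ * ‖φ z‖ ≤ ‖c₁‖ * 1 :=
              mul_le_mul_of_nonneg_left (hφb z hz) (norm_nonneg _)
          _ < 1 := by simpa using hlt
      intro h
      rw [sub_eq_zero] at h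
      rw [← h] at this
      simp at this
    set ψ : ℂ → ℂ := fun z => (φ z - c₁) / Dn z with hψ
    have hψd : DifferentiableOn ℂ ψ (ball 0 1) :=
      ((hφd.sub_const c₁).div ((differentiableOn_const 1).sub
        ((differentiableOn_const _).mul hφd)) hDnne)
    have hψ0 : ψ 0 = 0 := by simp [hψ, hc]
    have hψb : ∀ z ∈ ball (0:ℂ) 1, ‖ψ z‖ ≤ 1 := by
      intro z hz
      rw [hψ]
      simp only [norm_div]
      have key : ‖Dn z‖^2 - ‖φ z - c₁‖^2 = (1 - ‖φ z‖^2) * (1 - ‖c₁‖^2) :=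
        mob_key (φ z) c₁
      have e1 : ‖φ z‖^2 ≤ 1 := by nlinarith [hφb z hz, norm_nonneg (φ z)]
      have e2 : ‖c₁‖^2 ≤ 1 := by nlinarith [hc1le, norm_nonneg c₁]
      have h1 : ‖φ z - c₁‖^2 ≤ ‖Dn z‖^2 := by nlinarith [key]
      have h2 : ‖φ z - c₁‖ ≤ ‖Dn z‖ := by
        nlinarith [norm_nonneg (φ z - c₁), norm_nonneg (Dn z)]
      rcases eq_or_ne (Dn z) 0 with h | h
      · exact absurd h (hDnne z hz)
      · rw [div_le_one (norm_pos_iff.mpr h)]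
        exact h2
    have hder : ‖deriv ψ 0‖ ≤ 1 := by
      refine le_of_forall_pos_le_add (fun ε hε => ?_)
      have hmaps : MapsTo ψ (ball (0:ℂ) 1) (ball (ψ 0) (1 + ε)) := by
        intro w hw
        rw [hψ0, mem_ball_zero_iff]
        exact lt_of_le_of_lt (hψb w hw) (by linarith)
      have := Complex.norm_deriv_le_div_of_mapsTo_ball hψd (hmaps.mono_right ball_subset_closedBall) one_pos
      simpa [div_one] using this
    have hφat : DifferentiableAt ℂ φ 0 := (hφd.differentiableAt (ball_mem_nhds _ one_pos))
    have hD0 : Dn 0 = 1 - (‖c₁‖^2 : ℝ) := by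
      rw [hDn]
      simp only [← hc]
      rw [Complex.conj_mul']
      norm_num
    have hD0ne : Dn 0 ≠ 0 := hDnne 0 h01
    have hderiv : deriv ψ 0 = deriv φ 0 / Dn 0 := by
      have hN : HasDerivAt (fun z => φ z - c₁) (deriv φ 0) 0 :=
        (hφat.hasDerivAt).sub_const c₁
      have hD : HasDerivAt Dn (-((starRingEnd ℂ) c₁ * deriv φ 0)) 0 := by
        have := (hφat.hasDerivAt).const_mul ((starRingEnd ℂ) c₁)
        have h2 := (hasDerivAt_const (0:ℂ) (1:ℂ)).sub this
        simp only [zero_sub] at h2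
        exact h2
      have h' := (hN.div hD hD0ne).deriv
      rw [hψ, show (fun z => (φ z - c₁) / Dn z) = (fun z => φ z - c₁) / Dn from rfl, h']
      have hz0 : φ 0 - c₁ = 0 := by simp [hc]
      rw [hz0]
      field_simp
      ring
    rw [hderiv] at hder
    have hDnorm : ‖Dn 0‖ = 1 - ‖c₁‖^2 := by
      rw [hD0, show ((1:ℂ) - (‖c₁‖^2:ℝ)) = ((1 - ‖c₁‖^2 : ℝ) : ℂ) by push_cast; ring,
        Complex.norm_real, Real.norm_eq_abs, _root_.abs_of_nonneg (by nlinarith [norm_nonneg c₁])]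
    rw [norm_div, hDnorm, div_le_one (by nlinarith [norm_nonneg c₁])] at hder
    rw [hc1] at hder
    exact hder
  · -- max modulus case : ‖φ 0‖ = 1
    have heq' : ‖φ 0‖ = 1 := by rw [hc] at heq; exact heq
    have hmax : IsMaxOn (norm ∘ φ) (ball (0:ℂ) 1) 0 := by
      intro z hz
      simp only [Function.comp_apply, mem_setOf_eq, heq']
      exact hφb z hz
    have heqon : EqOn φ (fun _ => φ 0) (ball (0:ℂ) 1) :=
      Complex.eqOn_of_isPreconnected_of_isMaxOn_norm
        (convex_ball (0:ℂ) 1).isPreconnected isOpen_ball hφd h01 hmax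
    have hzero : deriv φ 0 = 0 := by
      have hev : φ =ᶠ[nhds (0:ℂ)] (fun _ => φ 0) :=
        Filter.eventuallyEq_iff_exists_mem.mpr ⟨ball 0 1, ball_mem_nhds _ one_pos, heqon⟩
      rw [hev.deriv_eq]
      simp
    rw [hzero, ← hc1, heq]
    norm_num

lemma logcoeff_series (f : ℂ → ℂ) (γ : ℕ → ℂ) (hγ : IsLogCoeff f γ) :
    HasFPowerSeriesOnBall (fun z => if z = 0 then 0 else Complex.log (f z / z))
      (ofScalars ℂ (fun n => if n = 0 then 0 else 2 * γ n)) 0 1 := by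
  set c : ℕ → ℂ := fun n => if n = 0 then 0 else 2 * γ n with hcdef
  set p := ofScalars ℂ c with hp
  have happ : ∀ (y : ℂ) (n : ℕ), (p n fun _ => y) = c n * y ^ n := by
    intro y n
    rw [hp, ofScalars_apply_eq, smul_eq_mul]
  have hsum : ∀ y : ℂ, ‖y‖ < 1 →
      HasSum (fun n => c n * y ^ n)
        ((fun z => if z = 0 then 0 else Complex.log (f z / z)) y) := by
    intro y hy
    rcases eq_or_ne y 0 with rfl | hy0
    · simp only [if_pos rfl]
      have : (fun n => c n * (0:ℂ) ^ n) = fun _ => (0:ℂ) := by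
        funext n
        rcases Nat.eq_zero_or_pos n with rfl | hn
        · simp [hcdef]
        · rw [zero_pow hn.ne', mul_zero]
      rw [this]
      exact hasSum_zero
    · simp only [if_neg hy0]
      have h1 := hγ y (mem_ball_zero_iff.mpr hy) hy0
      have h2 : ∀ n, c (n + 1) * y ^ (n + 1) = 2 * γ (n + 1) * y ^ (n + 1) := by
        intro n; simp [hcdef]
      have h3 : HasSum (fun n => c (n + 1) * y ^ (n + 1)) (Complex.log (f y / y)) := by
        simpa only [h2] using h1
      refine (hasSum_nat_add_iff' 1).mp ?_
      simpa [hcdef] using h3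
  refine ⟨?_, one_pos, ?_⟩
  · -- 1 ≤ radius
    refine ENNReal.le_of_forall_nnreal_lt (fun r hr => ?_)
    have hrlt : (r : ℝ) < 1 := by exact_mod_cast hr
    have hs := (hsum (r : ℝ) (by simpa using hrlt.trans_le (le_refl 1))).summable
    refine p.le_radius_of_tendsto (l := 0) ?_
    have h0 := hs.tendsto_atTop_zero
    have := (continuous_norm.tendsto (0:ℂ)).comp h0
    simp only [Function.comp_def, norm_zero] at this
    convert this using 2 with n
    rw [hp, ofScalars_norm]
    rw [norm_mul, norm_pow]
    simp [Complex.norm_real, _root_.abs_of_nonneg r.coe_nonneg]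
  · intro y hy
    rw [zero_add]
    have hy' : ‖y‖ < 1 := by
      have := mem_emetric_ball_zero_iff.mp hy
      rw [enorm_eq_nnnorm] at this
      exact_mod_cast this
    simp only [happ]
    exact hsum y hy'

lemma analyticAt_deriv' {φ : ℂ → ℂ} (hφa : AnalyticAt ℂ φ 0) : AnalyticAt ℂ (deriv φ) 0 := by
  obtain ⟨s, hs, hsa⟩ := hφa.eventually_analyticAt.exists_mem
  exact (AnalyticOnNhd.deriv (fun x hx => hsa x hx)) 0 (mem_of_mem_nhds hs)

lemma deriv2_eq_two_deriv_dslope (F : ℂ → ℂ) (hF : AnalyticAt ℂ F 0) (h0 : F 0 = 0) :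
    deriv (deriv F) 0 = 2 * deriv (dslope F 0) 0 := by
  obtain ⟨p, hp⟩ := id hF
  have hφa : AnalyticAt ℂ (dslope F 0) 0 := ⟨p.fslope, hp.has_fpower_series_dslope_fslope⟩
  set φ := dslope F 0 with hφdef
  have hFeq : F = fun z => z * φ z := by
    funext z
    have h := sub_smul_dslope F 0 z
    simp only [sub_zero, smul_eq_mul, h0] at h
    rw [← h]
  have hev : ∀ᶠ z in nhds (0:ℂ), AnalyticAt ℂ φ z := hφa.eventually_analyticAt
  have hderivF : deriv F =ᶠ[nhds (0:ℂ)] fun z => φ z + z * deriv φ z := by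
    filter_upwards [hev] with z hz
    have h1 : HasDerivAt φ (deriv φ z) z := hz.differentiableAt.hasDerivAt
    have h2 : HasDerivAt (fun w => w * φ w) (1 * φ z + z * deriv φ z) z :=
      (hasDerivAt_id z).mul h1
    have h3 : HasDerivAt F (1 * φ z + z * deriv φ z) z := by rw [hFeq]; exact h2
    rw [h3.deriv]; ring
  rw [hderivF.deriv_eq]
  have hφ0 : HasDerivAt φ (deriv φ 0) 0 := hφa.differentiableAt.hasDerivAt
  have hdφ : AnalyticAt ℂ (deriv φ) 0 := analyticAt_deriv' hφa
  have h4 : HasDerivAt (fun z => z * deriv φ z) (1 * deriv φ 0 + 0 * deriv (deriv φ) 0) 0 :=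
    (hasDerivAt_id 0).mul hdφ.differentiableAt.hasDerivAt
  have h5 := (hφ0.add h4).deriv
  rw [show (fun z => φ z + z * deriv φ z) = φ + (fun z => z * deriv φ z) from rfl, h5]; ring

lemma coeffs_from_series {L : ℂ → ℂ} {p : FormalMultilinearSeries ℂ ℂ ℂ}
    (hp : HasFPowerSeriesAt L p 0) (h0 : L 0 = 0) :
    deriv L 0 = p.coeff 1 ∧ deriv (deriv L) 0 = 2 * p.coeff 2 := by
  refine ⟨hp.deriv, ?_⟩
  have h1 := deriv2_eq_two_deriv_dslope L ⟨p, hp⟩ h0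
  have h2 : deriv (dslope L 0) 0 = p.fslope.coeff 1 :=
    (hp.has_fpower_series_dslope_fslope).deriv
  rw [h1, h2, coeff_fslope]

lemma ofScalars_coeff' (c : ℕ → ℂ) (n : ℕ) : (ofScalars ℂ c).coeff n = c n := by
  have : (ofScalars ℂ c).coeff n = ofScalars ℂ c n (fun _ => 1) := rfl
  rw [this, ofScalars_apply_eq]
  simp

lemma numeric_facts (a l a₁ : ℝ) (ha : a ∈ Ioo (0:ℝ) 1) (hl : 0 < l)
    (ha₁ : a₁ ∈ Ioo (0:ℝ) 1 ∧ 7 * a₁ ^ 4 - 20 * a₁ ^ 3 + 24 * a₁ ^ 2 - 16 * a₁ + 4 = 0 ∧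
      ∀ x ∈ Ioo (0:ℝ) 1, 7 * x ^ 4 - 20 * x ^ 3 + 24 * x ^ 2 - 16 * x + 4 = 0 → x = a₁)
    (hcase : (a₁ ≤ a ∧ l ≤ 2 * (1 - a) ^ 2 / (a * (2 - a))) ∨
             (a ≤ a₁ ∧ l ≤ (1 - a) / Real.sqrt ((1 - a) ^ 2 + a ^ 2))) :
    a * (2 - a) * l ≤ 2 * (1 - a)^2 ∧ l < 1 := by
  obtain ⟨ha₁m, hroot, huniq⟩ := ha₁
  set P : ℝ → ℝ := fun x => 7 * x ^ 4 - 20 * x ^ 3 + 24 * x ^ 2 - 16 * x + 4 with hP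
  have hPcont : Continuous P := by fun_prop
  obtain ⟨ha0, ha1⟩ := ha
  have hden : 0 < a * (2 - a) := by nlinarith
  -- a₁ > 0.43
  have ha43 : (43:ℝ)/100 < a₁ := by
    by_contra hcon
    push_neg at hcon
    -- then P (43/100) ≤ 0 : if positive, root in (43/100, 1) distinct from a₁
    have hP43 : 0 < P (43/100) := by norm_num [hP]
    have hP1 : P 1 < 0 := by norm_num [hP]
    have : (0:ℝ) ∈ Ioo (P 1) (P (43/100)) := ⟨hP1, hP43⟩
    obtain ⟨y, hy, hPy⟩ := intermediate_value_Ioo' (by norm_num : (43:ℝ)/100 ≤ 1)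
      hPcont.continuousOn this
    have hy1 : y ∈ Ioo (0:ℝ) 1 := ⟨lt_trans (by norm_num) hy.1, hy.2⟩
    have := huniq y hy1 hPy
    -- y = a₁ but y > 43/100 ≥ a₁
    rw [this] at hy
    exact absurd hy.1 (not_lt.mpr hcon)
  -- key case facts
  have hmain : a * (2 - a) * l ≤ 2 * (1 - a)^2 := by
    rcases hcase with ⟨haa, hll⟩ | ⟨haa, hll⟩
    · rw [le_div_iff₀ hden] at hll
      linarith
    · -- a ≤ a₁ : P a ≥ 0
      have hPa : 0 ≤ P a := by
        rcases eq_or_lt_of_le haa with rfl | hlt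
        · exact le_of_eq hroot.symm
        by_contra hcon
        push_neg at hcon
        have hP0 : 0 < P 0 := by norm_num [hP]
        have : (0:ℝ) ∈ Ioo (P a) (P 0) := ⟨hcon, hP0⟩
        obtain ⟨y, hy, hPy⟩ := intermediate_value_Ioo' (le_of_lt ha0)
          hPcont.continuousOn this
        have hy1 : y ∈ Ioo (0:ℝ) 1 := ⟨hy.1, lt_trans hy.2 ha1⟩
        have heq := huniq y hy1 hPy
        rw [heq] at hy
        exact absurd (lt_trans hy.2 hlt) (lt_irrefl a₁)
      set S : ℝ := (1 - a)^2 + a^2 with hS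
      have hSpos : 0 < S := by positivity
      set s : ℝ := Real.sqrt S with hs
      have hs0 : 0 < s := Real.sqrt_pos.mpr hSpos
      have hs2 : s^2 = S := Real.sq_sqrt (le_of_lt hSpos)
      have h1 : a * (2 - a) * l ≤ a * (2 - a) * ((1 - a)/s) :=
        mul_le_mul_of_nonneg_left hll (le_of_lt hden)
      refine h1.trans ?_
      rw [show a * (2 - a) * ((1 - a) / s) = (a * (2 - a) * (1 - a)) / s by ring,
        div_le_iff₀ hs0]
      -- a(2-a)(1-a) ≤ 2(1-a)^2 * s
      have hPa' : 0 ≤ 7 * a ^ 4 - 20 * a ^ 3 + 24 * a ^ 2 - 16 * a + 4 := hPa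
      have hsq : (a * (2 - a) * (1 - a))^2 ≤ (2 * (1 - a)^2 * s)^2 := by
        have h2 : (2 * (1 - a)^2 * s)^2 = 4 * (1 - a)^4 * ((1 - a)^2 + a^2) := by
          rw [mul_pow, mul_pow, hs2, hS]; ring
        rw [h2]
        nlinarith [mul_nonneg (sq_nonneg (1 - a)) hPa']
      nlinarith [hsq, mul_nonneg (mul_nonneg (le_of_lt ha0) (by linarith : (0:ℝ) ≤ 2 - a))
        (by linarith : (0:ℝ) ≤ 1 - a), mul_nonneg (mul_nonneg (by norm_num : (0:ℝ) ≤ 2)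
        (sq_nonneg (1 - a))) (le_of_lt hs0)]
  refine ⟨hmain, ?_⟩
  rcases hcase with ⟨haa, hll⟩ | ⟨haa, hll⟩
  · -- a ≥ a₁ > 0.43 : λ₁ < 1
    have h43 : (43:ℝ)/100 < a := lt_of_lt_of_le ha43 haa
    refine lt_of_le_of_lt hll ?_
    rw [div_lt_one hden]
    nlinarith [sq_nonneg (a - 43/100), sq_nonneg (1 - a)]
  · refine lt_of_le_of_lt hll ?_
    have hSpos : (0:ℝ) < (1 - a)^2 + a^2 := by positivity
    rw [div_lt_one (Real.sqrt_pos.mpr hSpos)]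
    refine (Real.lt_sqrt (by linarith : (0:ℝ) ≤ 1 - a)).mpr ?_
    nlinarith

lemma final_arith (a l t u : ℝ) (ha0 : 0 < a) (ha1 : a < 1) (hl : 0 < l)
    (hkey : a * (2 - a) * l ≤ 2 * (1 - a)^2) (ht0 : 0 ≤ t) (hspp : u ≤ 1 - t^2) :
    l * u / (2*(2-a)) + a * (l * t)^2 / (4*(1-a)^2) ≤ l / (2*(2-a)) := by
  have h2a : (0:ℝ) < 2*(2-a) := by linarith
  have h4a : (0:ℝ) < 4*(1-a)^2 := by nlinarith
  have hb1 : l * u / (2*(2-a)) ≤ l * (1 - t^2) / (2*(2-a)) := by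
    rw [div_le_div_iff₀ h2a h2a]
    nlinarith [mul_le_mul_of_nonneg_left hspp hl.le]
  have hb2 : a * (l * t)^2 / (4*(1-a)^2) ≤ l * t^2 / (2*(2-a)) := by
    rw [div_le_div_iff₀ h4a h2a]
    nlinarith [mul_le_mul_of_nonneg_right hkey
      (by positivity : (0:ℝ) ≤ 2 * l * t^2)]
  calc l * u / (2*(2-a)) + a * (l * t)^2 / (4*(1-a)^2)
      ≤ l * (1 - t^2) / (2*(2-a)) + l * t^2 / (2*(2-a)) := add_le_add hb1 hb2
    _ = l / (2*(2-a)) := by rw [← add_div]; congr 1; ring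

end aux

theorem stmt_1 (a l a₁ : ℝ) (ha : a ∈ Ioo (0:ℝ) 1) (hl : 0 < l)
    (ha₁ : a₁ ∈ Ioo (0:ℝ) 1 ∧ 7 * a₁ ^ 4 - 20 * a₁ ^ 3 + 24 * a₁ ^ 2 - 16 * a₁ + 4 = 0 ∧
      ∀ x ∈ Ioo (0:ℝ) 1, 7 * x ^ 4 - 20 * x ^ 3 + 24 * x ^ 2 - 16 * x + 4 = 0 → x = a₁)
    (hcase : (a₁ ≤ a ∧ l ≤ 2 * (1 - a) ^ 2 / (a * (2 - a))) ∨
             (a ≤ a₁ ∧ l ≤ (1 - a) / Real.sqrt ((1 - a) ^ 2 + a ^ 2)))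
    (f : ℂ → ℂ) (hf : f ∈ UClass a l) (γ : ℕ → ℂ) (hγ : IsLogCoeff f γ) :
    ‖γ 2‖ ≤ l / (2 * (2 - a)) := by
  obtain ⟨hfa, hf0, hfd, hfb⟩ := hf
  obtain ⟨hkey, hl1⟩ := numeric_facts a l a₁ ha hl ha₁ hcase
  obtain ⟨ha0, ha1⟩ := ha
  have h0ball : (0:ℂ) ∈ ball (0:ℂ) 1 := mem_ball_self one_pos
  -- f does not vanish on the punctured disc
  have hfne : ∀ z ∈ ball (0:ℂ) 1, z ≠ 0 → f z ≠ 0 := by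
    intro z hz hz0 hfz
    have hb := hfb z hz hz0
    have h1a : ((1:ℂ) + (a:ℂ)) ≠ 0 := by
      rw [show ((1:ℂ) + (a:ℂ)) = (((1+a:ℝ)):ℂ) by push_cast; ring]
      exact Complex.ofReal_ne_zero.mpr (by linarith)
    rw [hfz, div_zero, Complex.zero_cpow h1a, zero_mul, zero_sub, norm_neg, norm_one] at hb
    linarith
  -- the logarithm L
  set cs : ℕ → ℂ := fun n => if n = 0 then 0 else 2 * γ n with hcs
  set L : ℂ → ℂ := fun z => if z = 0 then 0 else Complex.log (f z / z) with hLdef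
  have hLs : HasFPowerSeriesOnBall L (FormalMultilinearSeries.ofScalars ℂ cs) 0 1 :=
    logcoeff_series f γ hγ
  have hL0 : L 0 = 0 := by simp [hLdef]
  have hLz : ∀ z : ℂ, z ≠ 0 → L z = Complex.log (f z / z) := by
    intro z hz; simp [hLdef, hz]
  have hLan : AnalyticOnNhd ℂ L (ball (0:ℂ) 1) := by
    intro z hz
    refine hLs.analyticOnNhd z ?_
    rw [mem_emetric_ball_zero_iff, enorm_eq_nnnorm]
    exact_mod_cast mem_ball_zero_iff.mp hz
  set L1 : ℂ → ℂ := deriv L with hL1def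
  have hL1an : AnalyticOnNhd ℂ L1 (ball (0:ℂ) 1) := hLan.deriv
  have hL2an : AnalyticOnNhd ℂ (deriv L1) (ball (0:ℂ) 1) := hL1an.deriv
  -- coefficients
  have hcoeffs := coeffs_from_series hLs.hasFPowerSeriesAt hL0
  have hL10 : L1 0 = 2 * γ 1 := by
    rw [hL1def, hcoeffs.1, ofScalars_coeff']
    simp [hcs]
  have hL20 : deriv L1 0 = 4 * γ 2 := by
    rw [hL1def, hcoeffs.2, ofScalars_coeff']
    simp [hcs]
    ring
  -- f z = z * exp (L z) on the disc
  have hfeq : ∀ z ∈ ball (0:ℂ) 1, f z = z * Complex.exp (L z) := by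
    intro z hz
    rcases eq_or_ne z 0 with rfl | hz0
    · simpa using hf0
    · rw [hLz z hz0, Complex.exp_log (div_ne_zero (hfne z hz hz0) hz0)]
      field_simp
  -- the function Φ
  set Φ : ℂ → ℂ := fun z => Complex.exp (-(a:ℂ) * L z) * (1 + z * L1 z) with hΦdef
  have hΦ0 : Φ 0 = 1 := by simp [hΦdef, hL0]
  have hΦan : ∀ z ∈ ball (0:ℂ) 1, AnalyticAt ℂ Φ z := by
    intro z hz
    exact ((analyticAt_const.mul (hLan z hz)).cexp).mul
      (analyticAt_const.add ((analyticAt_id).mul (hL1an z hz)))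
  -- derivative of f via L
  have hfderiv : ∀ z ∈ ball (0:ℂ) 1,
      HasDerivAt f (Complex.exp (L z) * (1 + z * L1 z)) z := by
    intro z hz
    have hdL : HasDerivAt L (L1 z) z := ((hLan z hz).differentiableAt).hasDerivAt
    have hE : HasDerivAt (fun w => Complex.exp (L w)) (Complex.exp (L z) * L1 z) z := hdL.cexp
    have hprod : HasDerivAt (fun w => w * Complex.exp (L w))
        (1 * Complex.exp (L z) + z * (Complex.exp (L z) * L1 z)) z :=
      (hasDerivAt_id z).mul hE
    have hev : f =ᶠ[nhds z] fun w => w * Complex.exp (L w) := by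
      filter_upwards [isOpen_ball.mem_nhds hz] with w hw
      exact hfeq w hw
    have := hprod.congr_of_eventuallyEq hev
    exact this.congr_deriv (by ring)
  -- the bound ‖Φ z - 1‖ ≤ l on the disc
  have hΦgood : ∀ z ∈ ball (0:ℂ) 1, z ≠ 0 → (f z / z).arg ≠ Real.pi →
      ‖Φ z - 1‖ < l := by
    intro z hz hz0 harg
    have hq : f z / z ≠ 0 := div_ne_zero (hfne z hz hz0) hz0
    have hb := hfb z hz hz0
    have hzf : z / f z = (f z / z)⁻¹ := by rw [inv_div]
    have hcpow : (z / f z) ^ ((1:ℂ) + (a:ℂ))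
        = Complex.exp (-L z * (1 + (a:ℂ))) := by
      rw [hzf, Complex.cpow_def_of_ne_zero (inv_ne_zero hq), Complex.log_inv _ harg,
        ← hLz z hz0]
    have hdf : deriv f z = Complex.exp (L z) * (1 + z * L1 z) := (hfderiv z hz).deriv
    rw [hcpow, hdf, show Complex.exp (-L z * (1 + (a:ℂ))) * (Complex.exp (L z) * (1 + z * L1 z))
        = (Complex.exp (-L z * (1 + (a:ℂ))) * Complex.exp (L z)) * (1 + z * L1 z) by ring,
      ← Complex.exp_add] at hb
    show ‖Complex.exp (-(a:ℂ) * L z) * (1 + z * L1 z) - 1‖ < l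
    rw [show -(a:ℂ) * L z = -L z * (1 + (a:ℂ)) + L z by ring]
    exact hb
  have hΦb : ∀ z ∈ ball (0:ℂ) 1, ‖Φ z - 1‖ ≤ l := by
    intro z hz
    rcases eq_or_ne z 0 with rfl | hz0
    · rw [hΦ0]; simpa using hl.le
    rcases ne_or_eq ((f z / z).arg) Real.pi with harg | harg
    · exact (hΦgood z hz hz0 harg).le
    -- bad point: density argument
    · have hzcl : z ∈ closure {w | w ∈ ball (0:ℂ) 1 ∧ w ≠ 0 ∧ (f w / w).arg ≠ Real.pi} := by
        by_contra hcl
        rw [_root_.mem_closure_iff] at hcl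
        push_neg at hcl
        obtain ⟨V, hVo, hVz, hVdis⟩ := hcl
        set W : Set ℂ := (V ∩ ball (0:ℂ) 1) ∩ {(0:ℂ)}ᶜ with hW
        have hWo : IsOpen W := ((hVo.inter isOpen_ball).inter (isOpen_compl_singleton))
        have hWz : z ∈ W := ⟨⟨hVz, hz⟩, hz0⟩
        have hWim : ∀ w ∈ W, (L w).im = Real.pi := by
          intro w hw
          have : ¬(w ∈ ball (0:ℂ) 1 ∧ w ≠ 0 ∧ (f w / w).arg ≠ Real.pi) := by
            intro hcon
            exact (Set.eq_empty_iff_forall_notMem.mp hVdis w) ⟨hw.1.1, hcon⟩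
          push_neg at this
          have harg' := this hw.1.2 hw.2
          rw [hLz w hw.2, Complex.log_im]
          exact harg'
        rcases hLan.is_constant_or_isOpen (convex_ball (0:ℂ) 1).isPreconnected with
          ⟨w₀, hw₀⟩ | hopen
        · have h1 := hw₀ 0 h0ball
          have h2 := hw₀ z hz
          rw [hL0] at h1
          have := hWim z hWz
          rw [h2, ← h1] at this
          simp at this
          exact Real.pi_ne_zero this.symm
        · have himg : IsOpen (L '' W) :=
            hopen W (fun w hw => hw.1.2) hWo
          have hmem : L z ∈ L '' W := ⟨z, hWz, rfl⟩
          obtain ⟨ε, hε, hball⟩ := Metric.isOpen_iff.mp himg _ hmem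
          have hptm : L z + (ε/2) * Complex.I ∈ Metric.ball (L z) ε := by
            rw [mem_ball_iff_norm]
            rw [show L z + (ε/2) * Complex.I - L z = (ε/2) * Complex.I by ring]
            rw [norm_mul, Complex.norm_I, mul_one]
            rw [show ((ε:ℂ)/2) = (((ε/2 : ℝ)):ℂ) by push_cast; ring, Complex.norm_real,
              Real.norm_eq_abs, abs_of_pos (by linarith)]
            linarith
          obtain ⟨w, hwW, hweq⟩ := hball hptm
          have h3 : (L z + (ε/2) * Complex.I).im = Real.pi := by
            rw [← hweq]; exact hWim w hwW
          have h4 : (L z + (ε/2) * Complex.I).im = (L z).im + ε/2 := by simp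
          rw [h3, hWim z hWz] at h4
          linarith
      -- continuity
      haveI hnb := mem_closure_iff_nhdsWithin_neBot.mp hzcl
      have hcont : ContinuousAt (fun w => ‖Φ w - 1‖) z :=
        (continuous_norm.continuousAt).comp (((hΦan z hz).continuousAt).sub continuousAt_const)
      have htd : Filter.Tendsto (fun w => ‖Φ w - 1‖)
          (nhdsWithin z {w : ℂ | w ∈ ball (0:ℂ) 1 ∧ w ≠ 0 ∧ (f w / w).arg ≠ Real.pi})
          (nhds ‖Φ z - 1‖) := (hcont.continuousWithinAt).tendsto
      refine le_of_tendsto htd ?_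
      filter_upwards [self_mem_nhdsWithin] with w hw
      exact (hΦgood w hw.1 hw.2.1 hw.2.2).le
  -- the Schwarz function ω
  set ω : ℂ → ℂ := fun z => (Φ z - 1) / (l:ℂ) with hωdef
  have hlne : ((l:ℝ):ℂ) ≠ 0 := Complex.ofReal_ne_zero.mpr hl.ne'
  have hω0 : ω 0 = 0 := by
    show (Φ 0 - 1) / (l:ℂ) = 0
    rw [hΦ0]; simp
  have hωb : ∀ z ∈ ball (0:ℂ) 1, ‖ω z‖ ≤ 1 := by
    intro z hz
    show ‖(Φ z - 1) / (l:ℂ)‖ ≤ 1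
    rw [norm_div, Complex.norm_real, Real.norm_eq_abs, abs_of_pos hl, div_le_one hl]
    exact hΦb z hz
  have hωderiv : ∀ z ∈ ball (0:ℂ) 1, HasDerivAt ω
      ((Complex.exp (-(a:ℂ) * L z) * ((-(a:ℂ) * L1 z) * (1 + z * L1 z)
        + (L1 z + z * deriv L1 z))) / (l:ℂ)) z := by
    intro z hz
    have hdL : HasDerivAt L (L1 z) z := ((hLan z hz).differentiableAt).hasDerivAt
    have hdL1 : HasDerivAt L1 (deriv L1 z) z := ((hL1an z hz).differentiableAt).hasDerivAt
    have hA : HasDerivAt (fun w => Complex.exp (-(a:ℂ) * L w))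
        (Complex.exp (-(a:ℂ) * L z) * (-(a:ℂ) * L1 z)) z := by
      have := (hdL.const_mul (-(a:ℂ))).cexp
      simpa using this
    have hB : HasDerivAt (fun w => 1 + w * L1 w) (1 * L1 z + z * deriv L1 z) z :=
      ((hasDerivAt_id z).mul hdL1).const_add 1
    have hΦd : HasDerivAt Φ (Complex.exp (-(a:ℂ)*L z) * (-(a:ℂ) * L1 z) * (1 + z * L1 z)
        + Complex.exp (-(a:ℂ)*L z) * (1 * L1 z + z * deriv L1 z)) z := hA.mul hB
    have := (hΦd.sub_const 1).div_const (l:ℂ)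
    exact this.congr_deriv (by ring)
  have hωan0 : AnalyticAt ℂ ω 0 :=
    ((hΦan 0 h0ball).sub analyticAt_const).div analyticAt_const hlne
  have hc1eq : ((l:ℝ):ℂ) * deriv ω 0 = 2 * (1 - (a:ℂ)) * γ 1 := by
    rw [(hωderiv 0 h0ball).deriv, hL0, hL10]
    simp only [mul_zero, zero_mul, neg_zero, Complex.exp_zero, add_zero, zero_add, one_mul, mul_one]
    field_simp
    ring
  -- second derivative of ω at 0
  set Dω : ℂ → ℂ := fun z => (Complex.exp (-(a:ℂ) * L z) * ((-(a:ℂ) * L1 z) * (1 + z * L1 z)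
        + (L1 z + z * deriv L1 z))) / (l:ℂ) with hDωdef
  have hev : deriv ω =ᶠ[nhds (0:ℂ)] Dω := by
    filter_upwards [isOpen_ball.mem_nhds h0ball] with w hw
    exact (hωderiv w hw).deriv
  have hd2 : deriv (deriv ω) 0 = deriv Dω 0 := hev.deriv_eq
  have hDωd : HasDerivAt Dω
      ((Complex.exp (-(a:ℂ) * L 0) * (-(a:ℂ) * L1 0) * ((-(a:ℂ) * L1 0) * (1 + 0 * L1 0)
          + (L1 0 + 0 * deriv L1 0))
        + Complex.exp (-(a:ℂ) * L 0) *
          (((-(a:ℂ) * deriv L1 0) * (1 + 0 * L1 0) + (-(a:ℂ) * L1 0) * (1 * L1 0 + 0 * deriv L1 0))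
            + (deriv L1 0 + (1 * deriv L1 0 + 0 * deriv (deriv L1) 0)))) / (l:ℂ)) 0 := by
    have hdL : HasDerivAt L (L1 0) 0 := ((hLan 0 h0ball).differentiableAt).hasDerivAt
    have hdL1 : HasDerivAt L1 (deriv L1 0) 0 := ((hL1an 0 h0ball).differentiableAt).hasDerivAt
    have hdL2 : HasDerivAt (deriv L1) (deriv (deriv L1) 0) 0 :=
      ((hL2an 0 h0ball).differentiableAt).hasDerivAt
    have hA : HasDerivAt (fun w => Complex.exp (-(a:ℂ) * L w))
        (Complex.exp (-(a:ℂ) * L 0) * (-(a:ℂ) * L1 0)) 0 := by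
      have := (hdL.const_mul (-(a:ℂ))).cexp
      simpa using this
    have hB : HasDerivAt (fun w => 1 + w * L1 w) (1 * L1 0 + 0 * deriv L1 0) 0 :=
      ((hasDerivAt_id 0).mul hdL1).const_add 1
    have ht1 : HasDerivAt (fun w => (-(a:ℂ) * L1 w) * (1 + w * L1 w))
        ((-(a:ℂ) * deriv L1 0) * (1 + 0 * L1 0) + (-(a:ℂ) * L1 0) * (1 * L1 0 + 0 * deriv L1 0)) 0 :=
      (hdL1.const_mul (-(a:ℂ))).mul hB
    have ht2 : HasDerivAt (fun w => L1 w + w * deriv L1 w)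
        (deriv L1 0 + (1 * deriv L1 0 + 0 * deriv (deriv L1) 0)) 0 :=
      hdL1.add ((hasDerivAt_id 0).mul hdL2)
    exact (hA.mul (ht1.add ht2)).div_const (l:ℂ)
  have hc2eq : ((l:ℝ):ℂ) * deriv (deriv ω) 0
      = 4 * (2 - (a:ℂ)) * γ 2 - 4 * (a:ℂ) * (2 - (a:ℂ)) * (γ 1)^2 := by
    rw [hd2, hDωd.deriv, hL0, hL10, hL20]
    simp only [mul_zero, zero_mul, neg_zero, Complex.exp_zero, add_zero, zero_add, one_mul, mul_one]
    field_simp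
    ring
  -- Schwarz-Pick
  have hωdiff : DifferentiableOn ℂ ω (ball 0 1) :=
    fun z hz => ((hωderiv z hz).differentiableAt).differentiableWithinAt
  have hsp := schwarz_pick_zero ω hωdiff hω0 hωb
  have hdd := deriv2_eq_two_deriv_dslope ω hωan0 hω0
  set c1 : ℂ := deriv ω 0 with hc1def
  set c2 : ℂ := deriv (dslope ω 0) 0 with hc2def
  have hc2eq' : ((l:ℝ):ℂ) * (2 * c2) = 4 * (2 - (a:ℂ)) * γ 2 - 4 * (a:ℂ) * (2 - (a:ℂ)) * (γ 1)^2 := by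
    rw [hc2def, ← hdd]
    exact hc2eq
  have h2ane : (2 - (a:ℂ)) ≠ 0 := by
    rw [show (2 - (a:ℂ)) = (((2-a:ℝ)):ℂ) by push_cast; ring]
    exact Complex.ofReal_ne_zero.mpr (by linarith)
  have h1ane : (1 - (a:ℂ)) ≠ 0 := by
    rw [show (1 - (a:ℂ)) = (((1-a:ℝ)):ℂ) by push_cast; ring]
    exact Complex.ofReal_ne_zero.mpr (by linarith)
  have hγ2eq : γ 2 = ((l:ℝ):ℂ) * c2 / (2*(2-(a:ℂ)))
      + (a:ℂ) * (((l:ℝ):ℂ) * c1)^2 / (4*(1-(a:ℂ))^2) := by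
    have e1 : (((l:ℝ):ℂ) * c1)^2 = 4*(1-(a:ℂ))^2*(γ 1)^2 := by rw [hc1eq]; ring
    have e2 : ((l:ℝ):ℂ) * c2 = 2*(2-(a:ℂ))*γ 2 - 2*(a:ℂ)*(2-(a:ℂ))*(γ 1)^2 := by
      linear_combination hc2eq' / 2
    rw [e2, e1]
    field_simp
    ring
  -- pass to norms
  have hn1 : ‖((l:ℝ):ℂ) * c2 / (2*(2-(a:ℂ)))‖ = l * ‖c2‖ / (2*(2-a)) := by
    rw [norm_div, norm_mul, Complex.norm_real, Real.norm_eq_abs, abs_of_pos hl,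
      show (2*(2-(a:ℂ))) = (((2*(2-a):ℝ)):ℂ) by push_cast; ring, Complex.norm_real,
      Real.norm_eq_abs, abs_of_pos (by linarith)]
  have hn2 : ‖(a:ℂ) * (((l:ℝ):ℂ) * c1)^2 / (4*(1-(a:ℂ))^2)‖
      = a * (l * ‖c1‖)^2 / (4*(1-a)^2) := by
    rw [norm_div, norm_mul, norm_pow, norm_mul,
      show (4*(1-(a:ℂ))^2) = (((4*(1-a)^2:ℝ)):ℂ) by push_cast; ring,
      Complex.norm_real, Complex.norm_real, Complex.norm_real,
      Real.norm_eq_abs, Real.norm_eq_abs, Real.norm_eq_abs,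
      abs_of_pos ha0, abs_of_pos hl, abs_of_pos (show (0:ℝ) < 4*(1-a)^2 by nlinarith)]
  have hbound : ‖γ 2‖ ≤ l * ‖c2‖ / (2*(2-a)) + a * (l * ‖c1‖)^2 / (4*(1-a)^2) := by
    rw [hγ2eq]
    calc ‖((l:ℝ):ℂ) * c2 / (2*(2-(a:ℂ))) + (a:ℂ) * (((l:ℝ):ℂ) * c1)^2 / (4*(1-(a:ℂ))^2)‖
        ≤ ‖((l:ℝ):ℂ) * c2 / (2*(2-(a:ℂ)))‖ + ‖(a:ℂ) * (((l:ℝ):ℂ) * c1)^2 / (4*(1-(a:ℂ))^2)‖ :=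
          norm_add_le _ _
      _ = l * ‖c2‖ / (2*(2-a)) + a * (l * ‖c1‖)^2 / (4*(1-a)^2) := by rw [hn1, hn2]
  -- final real arithmetic
  set t : ℝ := ‖c1‖ with htdef
  set u : ℝ := ‖c2‖ with hudef
  have ht0 : 0 ≤ t := norm_nonneg _
  have hspp : u ≤ 1 - t^2 := hsp
  exact hbound.trans (final_arith a l t u ha0 ha1 hl hkey ht0 hspp)
end

section
/- Let 0<α<1, λ⋆=(1−α)/√((1−α)²+α²), λ₁=2(1−α)²/(α(2−α)), and let α₁≈0.4825 be the unique real root of 7α⁴−20α³+24α²−16α+4=0 on (0,1). If α∈[α₁,1), λ₁≤λ≤λ⋆, and f∈U(α,λ), then the second logarithmic coefficient satisfies |γ₂| ≤ αλ²/(4(1−α)²). -/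
open Complex Metric Set

open Filter FormalMultilinearSeries

lemma aux_series (c : ℕ → ℂ) (hc : ∀ z ∈ ball (0:ℂ) 1, Summable (fun n => c n * z ^ n)) :
    ∃ S : ℂ → ℂ, AnalyticOnNhd ℂ S (ball 0 1) ∧
      (∀ z ∈ ball (0:ℂ) 1, HasSum (fun n => c n * z ^ n) (S z)) ∧
      deriv S 0 = c 1 ∧ iteratedDeriv 2 S 0 = 2 * c 2 := by
  set p := ofScalars ℂ c with hp
  have hrad : 1 ≤ p.radius := by
    apply ENNReal.le_of_forall_nnreal_lt
    intro r hr
    have hrb : ((r:ℂ) : ℂ) ∈ ball (0:ℂ) 1 := by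
      rw [mem_ball_zero_iff, Complex.norm_real, Real.norm_eq_abs,
        _root_.abs_of_nonneg r.coe_nonneg]
      exact_mod_cast hr
    have hsum := hc _ hrb
    have htend : Tendsto (fun n => ‖p n‖ * (r:ℝ) ^ n) atTop (nhds 0) := by
      have h0 : Tendsto (fun n => c n * ((r:ℝ):ℂ) ^ n) atTop (nhds 0) := hsum.tendsto_atTop_zero
      have := h0.norm
      simp only [norm_zero, norm_mul, norm_pow] at this
      convert this using 2 with n
      rw [ofScalars_norm]
      norm_num
    exact p.le_radius_of_tendsto htend
  have hpos : 0 < p.radius := lt_of_lt_of_le one_pos hrad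
  have hS : HasFPowerSeriesOnBall p.sum p 0 1 :=
    (p.hasFPowerSeriesOnBall hpos).mono one_pos hrad
  have hcoeff : ∀ n, p.coeff n = c n := by
    intro n
    have e : p.coeff n = p n (fun _ => 1) := rfl
    rw [e, ofScalars_apply_eq]
    simp
  refine ⟨p.sum, ?_, ?_, ?_, ?_⟩
  · intro z hz
    exact hS.analyticAt_of_mem (by simpa [mem_emetric_ball_zero_iff,
      ← ENNReal.coe_one, ENNReal.coe_lt_coe, ← NNReal.coe_lt_coe] using mem_ball_zero_iff.mp hz)
  · intro z hz
    have hz' : z ∈ Metric.eball (0:ℂ) 1 := by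
      simpa [mem_emetric_ball_zero_iff, ← ENNReal.coe_one, ENNReal.coe_lt_coe,
        ← NNReal.coe_lt_coe] using mem_ball_zero_iff.mp hz
    have := hS.hasSum hz'
    simpa [ofScalars_apply_eq, hcoeff, mul_comm] using this
  · have h1 := hS.factorial_smul (y := (1:ℂ)) 1
    rw [← iteratedDeriv_eq_iteratedFDeriv] at h1
    have e1 : (p 1 fun _ => (1:ℂ)) = c 1 := by
      exact hcoeff 1
    rw [iteratedDeriv_one] at h1
    rw [e1] at h1
    simpa using h1.symm
  · have h2 := hS.factorial_smul (y := (1:ℂ)) 2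
    rw [← iteratedDeriv_eq_iteratedFDeriv] at h2
    have e2 : (p 2 fun _ => (1:ℂ)) = c 2 := by
      exact hcoeff 2
    rw [e2] at h2
    rw [← h2]
    simp [Nat.factorial]

lemma mobius_bound (a b : ℂ) (ha : ‖a‖ ≤ 1) (hb : ‖b‖ ≤ 1) :
    ‖a - b‖ ≤ ‖1 - (starRingEnd ℂ) b * a‖ := by
  have key : ((1 - (starRingEnd ℂ) b * a) * (starRingEnd ℂ) (1 - (starRingEnd ℂ) b * a)
      - (a - b) * (starRingEnd ℂ) (a - b))
      = (1 - a * (starRingEnd ℂ) a) * (1 - b * (starRingEnd ℂ) b) := by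
    simp only [map_sub, map_mul, map_one, Complex.conj_conj]
    ring
  rw [Complex.mul_conj, Complex.mul_conj, Complex.mul_conj, Complex.mul_conj] at key
  have hre := congrArg Complex.re key
  push_cast at hre
  simp only [Complex.sub_re, Complex.ofReal_re, Complex.mul_re, Complex.sub_im,
    Complex.ofReal_im, Complex.one_re, Complex.one_im] at hre
  have hna : Complex.normSq a ≤ 1 := by
    rw [Complex.normSq_eq_norm_sq]
    nlinarith [norm_nonneg a]
  have hnb : Complex.normSq b ≤ 1 := by
    rw [Complex.normSq_eq_norm_sq]
    nlinarith [norm_nonneg b]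
  have h1 : Complex.normSq (a - b) ≤ Complex.normSq (1 - (starRingEnd ℂ) b * a) := by
    nlinarith [hre]
  have e1 : Complex.normSq (a - b) = ‖a - b‖ ^ 2 := by
    rw [Complex.normSq_eq_norm_sq]
  have e2 : Complex.normSq (1 - (starRingEnd ℂ) b * a) = ‖1 - (starRingEnd ℂ) b * a‖ ^ 2 := by
    rw [Complex.normSq_eq_norm_sq]
  nlinarith [norm_nonneg (a - b), norm_nonneg (1 - (starRingEnd ℂ) b * a)]

lemma schwarz_two (ω : ℂ → ℂ) (hω : AnalyticOnNhd ℂ ω (ball 0 1)) (h0 : ω 0 = 0)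
    (hb : ∀ z ∈ ball (0:ℂ) 1, ‖ω z‖ ≤ 1) :
    ‖deriv ω 0‖ ≤ 1 ∧ ‖iteratedDeriv 2 ω 0‖ ≤ 2 * (1 - ‖deriv ω 0‖ ^ 2) := by
  have hball : (0:ℂ) ∈ ball (0:ℂ) 1 := mem_ball_self one_pos
  have hd : DifferentiableOn ℂ ω (ball 0 1) := hω.differentiableOn
  set φ := dslope ω 0 with hφdef
  have hφb : ∀ z ∈ ball (0:ℂ) 1, ‖φ z‖ ≤ 1 := by
    intro z hz
    have h2 : ∀ ε : ℝ, 0 < ε → ‖φ z‖ ≤ 1 + ε := by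
      intro ε hε
      have maps : MapsTo ω (ball 0 1) (closedBall (ω 0) (1 + ε)) := by
        intro x hx
        rw [h0, mem_closedBall_zero_iff]
        exact le_trans (hb x hx) (by linarith)
      have := Complex.norm_dslope_le_div_of_mapsTo_ball hd maps hz
      simpa using this
    exact le_of_forall_pos_le_add h2
  have hφd : DifferentiableOn ℂ φ (ball 0 1) :=
    (differentiableOn_dslope (ball_mem_nhds 0 one_pos)).mpr hd
  have hφ0 : φ 0 = deriv ω 0 := dslope_same ω 0
  have hb1 : ‖deriv ω 0‖ ≤ 1 := by rw [← hφ0]; exact hφb 0 hball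
  -- φ is analytic on the ball
  have hφa : AnalyticOnNhd ℂ φ (ball 0 1) := by
    intro z hz
    rcases eq_or_ne z 0 with rfl | hz0
    · obtain ⟨q, hq⟩ := hω 0 hball
      exact ⟨q.fslope, hq.has_fpower_series_dslope_fslope⟩
    · have ha' : AnalyticAt ℂ (fun w => ω w / w) z := (hω z hz).div analyticAt_id hz0
      apply ha'.congr
      have hev : ∀ᶠ w in nhds z, w ≠ 0 := eventually_ne_nhds hz0
      filter_upwards [hev] with w hw
      rw [hφdef, dslope_of_ne ω hw, slope_def_field, h0, sub_zero, sub_zero]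
  have hφ'a : AnalyticAt ℂ (deriv φ) 0 := hφa.deriv 0 hball
  have hωφ : ∀ z : ℂ, ω z = z * φ z := by
    intro z
    have h := sub_smul_dslope ω 0 z
    rw [h0, sub_zero, sub_zero, smul_eq_mul] at h
    exact h.symm
  have hit2 : iteratedDeriv 2 ω 0 = 2 * deriv φ 0 := by
    have hdω : ∀ z ∈ ball (0:ℂ) 1, deriv ω z = φ z + z * deriv φ z := by
      intro z hz
      have h1 : HasDerivAt (fun w => w * φ w) (1 * φ z + z * deriv φ z) z :=
        (hasDerivAt_id z).mul ((hφa z hz).differentiableAt.hasDerivAt)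
      have h2 : deriv (fun w => w * φ w) z = φ z + z * deriv φ z := by
        rw [h1.deriv]; ring
      rw [← h2]
      congr 1
      funext w
      exact hωφ w
    have heq : deriv ω =ᶠ[nhds 0] fun z => φ z + z * deriv φ z :=
      Filter.eventuallyEq_of_mem (isOpen_ball.mem_nhds hball) hdω
    have h3 : HasDerivAt (fun z => φ z + z * deriv φ z)
        (deriv φ 0 + (1 * deriv φ 0 + 0 * deriv (deriv φ) 0)) 0 :=
      ((hφa 0 hball).differentiableAt.hasDerivAt).add
        ((hasDerivAt_id 0).mul hφ'a.differentiableAt.hasDerivAt)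
    calc iteratedDeriv 2 ω 0 = deriv (deriv ω) 0 := by
          rw [iteratedDeriv_succ, iteratedDeriv_one]
      _ = deriv (fun z => φ z + z * deriv φ z) 0 := heq.deriv_eq
      _ = 2 * deriv φ 0 := by rw [h3.deriv]; ring
  refine ⟨hb1, ?_⟩
  rcases lt_or_eq_of_le hb1 with hlt | heq1
  · -- Möbius transform argument
    set t := deriv ω 0 with ht
    have hden : ∀ z ∈ ball (0:ℂ) 1, (1:ℂ) - (starRingEnd ℂ) t * φ z ≠ 0 := by
      intro z hz hc
      have h1 : ‖(starRingEnd ℂ) t * φ z‖ < 1 := by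
        rw [norm_mul, RCLike.norm_conj]
        calc ‖t‖ * ‖φ z‖ ≤ ‖t‖ * 1 := by
              exact mul_le_mul_of_nonneg_left (hφb z hz) (norm_nonneg t)
          _ = ‖t‖ := mul_one _
          _ < 1 := hlt
      rw [sub_eq_zero] at hc
      rw [← hc] at h1
      simp at h1
    set ψ := fun z => (φ z - t) / (1 - (starRingEnd ℂ) t * φ z) with hψdef
    have hψd : DifferentiableOn ℂ ψ (ball 0 1) :=
      (hφd.sub (differentiableOn_const t)).div
        ((differentiableOn_const 1).sub ((differentiableOn_const _).mul hφd)) hden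
    have hψ0 : ψ 0 = 0 := by
      rw [hψdef]
      simp [hφ0, ← ht]
    have hψb : ∀ z ∈ ball (0:ℂ) 1, ‖ψ z‖ ≤ 1 := by
      intro z hz
      rw [hψdef]
      dsimp only
      rw [norm_div]
      rcases eq_or_ne (1 - (starRingEnd ℂ) t * φ z) 0 with h | h
      · exact absurd h (hden z hz)
      · rw [div_le_one (norm_pos_iff.mpr h)]
        exact mobius_bound (φ z) t (hφb z hz) hb1
    have hdψ0 : ‖deriv ψ 0‖ ≤ 1 := by
      have h2 : ∀ ε : ℝ, 0 < ε → ‖deriv ψ 0‖ ≤ 1 + ε := by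
        intro ε hε
        have maps : MapsTo ψ (ball 0 1) (closedBall (ψ 0) (1 + ε)) := by
          intro x hx
          rw [hψ0, mem_closedBall_zero_iff]
          exact le_trans (hψb x hx) (by linarith)
        have := Complex.norm_deriv_le_div_of_mapsTo_ball hψd maps one_pos
        simpa using this
      exact le_of_forall_pos_le_add h2
    -- compute deriv ψ 0
    have hXd : HasDerivAt (fun z => φ z - t) (deriv φ 0) 0 :=
      ((hφa 0 hball).differentiableAt.hasDerivAt).sub_const t
    have hYd : HasDerivAt (fun z => (1:ℂ) - (starRingEnd ℂ) t * φ z)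
        (0 - (starRingEnd ℂ) t * deriv φ 0) 0 :=
      (hasDerivAt_const 0 (1:ℂ)).sub (((hφa 0 hball).differentiableAt.hasDerivAt).const_mul _)
    have hYne : (1:ℂ) - (starRingEnd ℂ) t * φ 0 ≠ 0 := hden 0 hball
    have hψder := hXd.div hYd hYne
    have hderψ : deriv ψ 0 = deriv φ 0 / (1 - (starRingEnd ℂ) t * t) := by
      have := hψder.deriv
      rw [hψdef]
      rw [show (fun z => (φ z - t) / (1 - (starRingEnd ℂ) t * φ z))
        = (fun z => φ z - t) / (fun z => (1:ℂ) - (starRingEnd ℂ) t * φ z) from rfl]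
      rw [this, hφ0]
      have hD : (1:ℂ) - (starRingEnd ℂ) t * t ≠ 0 := by rw [hφ0] at hYne; exact hYne
      field_simp
      ring
    have hnorm : 0 < 1 - Complex.normSq t := by
      have : Complex.normSq t = ‖t‖ ^ 2 := by
        rw [Complex.normSq_eq_norm_sq]
      nlinarith [norm_nonneg t]
    have hct : (starRingEnd ℂ) t * t = (Complex.normSq t : ℂ) := by
      rw [mul_comm, Complex.mul_conj]
    have hdφ0 : ‖deriv φ 0‖ ≤ 1 - ‖t‖ ^ 2 := by
      have e1 : ‖deriv ψ 0‖ = ‖deriv φ 0‖ / (1 - Complex.normSq t) := by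
        rw [hderψ, hct, norm_div]
        congr 1
        rw [show (1:ℂ) - (Complex.normSq t : ℂ) = ((1 - Complex.normSq t : ℝ) : ℂ) by push_cast; ring]
        rw [Complex.norm_real, Real.norm_eq_abs, abs_of_pos hnorm]
      rw [e1, div_le_one hnorm] at hdψ0
      have : Complex.normSq t = ‖t‖ ^ 2 := by
        rw [Complex.normSq_eq_norm_sq]
      linarith [hdψ0, this ▸ hdψ0]
    rw [hit2, norm_mul]
    simp only [Complex.norm_ofNat]
    nlinarith [hdφ0]
  · -- boundary case: |deriv ω 0| = 1, local max ⇒ deriv φ 0 = 0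
    have hmax : IsLocalMax (norm ∘ φ) 0 := by
      filter_upwards [isOpen_ball.mem_nhds hball] with z hz
      simp only [Function.comp_apply]
      have h01 : ‖φ 0‖ = 1 := by rw [hφ0, heq1]
      calc ‖φ z‖ ≤ 1 := hφb z hz
        _ = ‖φ 0‖ := h01.symm
    have hdiff : ∀ᶠ z in nhds 0, DifferentiableAt ℂ φ z := by
      filter_upwards [isOpen_ball.mem_nhds hball] with z hz
      exact (hφa z hz).differentiableAt
    have hconst := Complex.eventually_eq_of_isLocalMax_norm hdiff hmax
    have hder0 : deriv φ 0 = 0 := by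
      have := Filter.EventuallyEq.deriv_eq hconst
      rw [this, deriv_const]
    rw [hit2, hder0, mul_zero, norm_zero, heq1]
    norm_num

set_option maxHeartbeats 1000000 in
theorem stmt_2 (a l a₁ : ℝ) (ha : a ∈ Ioo (0:ℝ) 1) (hl : 0 < l)
    (ha₁ : a₁ ∈ Ioo (0:ℝ) 1 ∧ 7 * a₁ ^ 4 - 20 * a₁ ^ 3 + 24 * a₁ ^ 2 - 16 * a₁ + 4 = 0 ∧
      ∀ x ∈ Ioo (0:ℝ) 1, 7 * x ^ 4 - 20 * x ^ 3 + 24 * x ^ 2 - 16 * x + 4 = 0 → x = a₁)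
    (haa₁ : a₁ ≤ a)
    (hl₁ : 2 * (1 - a) ^ 2 / (a * (2 - a)) ≤ l)
    (hls : l ≤ (1 - a) / Real.sqrt ((1 - a) ^ 2 + a ^ 2))
    (f : ℂ → ℂ) (hf : f ∈ UClass a l) (γ : ℕ → ℂ) (hγ : IsLogCoeff f γ) :
    ‖γ 2‖ ≤ a * l ^ 2 / (4 * (1 - a) ^ 2) := by
  obtain ⟨hfa, hf0, hf1, hfb⟩ := hf
  obtain ⟨ha0, ha1'⟩ := ha
  have hb0 : (0:ℂ) ∈ ball (0:ℂ) 1 := mem_ball_self one_pos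
  -- l < 1
  have h1a : (0:ℝ) < 1 - a := by linarith
  have hsqrt : (1 - a) < Real.sqrt ((1 - a) ^ 2 + a ^ 2) := by
    have h2 : Real.sqrt ((1 - a) ^ 2) < Real.sqrt ((1 - a) ^ 2 + a ^ 2) :=
      Real.sqrt_lt_sqrt (sq_nonneg _) (by nlinarith)
    rwa [Real.sqrt_sq h1a.le] at h2
  have hlt1 : l < 1 := by
    refine lt_of_le_of_lt hls ?_
    rw [div_lt_one (lt_trans h1a hsqrt)]
    exact hsqrt
  -- f does not vanish on the punctured ball
  have hfz : ∀ z ∈ ball (0:ℂ) 1, z ≠ 0 → f z ≠ 0 := by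
    intro z hz hz0 hc
    have h := hfb z hz hz0
    have hne : (1:ℂ) + (a:ℂ) ≠ 0 := by
      intro h'
      have := congrArg Complex.re h'
      simp at this
      linarith
    rw [hc, div_zero, Complex.zero_cpow hne, zero_mul, zero_sub, norm_neg, norm_one] at h
    linarith
  -- the log-coefficient series
  set c : ℕ → ℂ := fun n => if n = 0 then 0 else 2 * γ n with hcdef
  have hczero : ∀ (z : ℂ), (fun n => c n * z ^ n) 0 = 0 := by
    intro z; simp [hcdef]
  have hshift : ∀ (z : ℂ), (fun n => c (n + 1) * z ^ (n + 1)) = fun n : ℕ => 2 * γ (n + 1) * z ^ (n + 1) := by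
    intro z; funext n; simp [hcdef]
  have hlogsum : ∀ z ∈ ball (0:ℂ) 1, z ≠ 0 →
      HasSum (fun n => c n * z ^ n) (Complex.log (f z / z)) := by
    intro z hz hz0
    have h1 : HasSum (fun n => c (n + 1) * z ^ (n + 1)) (Complex.log (f z / z)) := by
      rw [hshift z]; exact hγ z hz hz0
    have h2 := (hasSum_nat_add_iff (f := fun n => c n * z ^ n) 1).mp h1
    simpa [hcdef] using h2
  have hsummable : ∀ z ∈ ball (0:ℂ) 1, Summable (fun n => c n * z ^ n) := by
    intro z hz
    rcases eq_or_ne z 0 with rfl | hz0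
    · apply summable_of_ne_finset_zero (s := {0})
      intro n hn
      simp only [Finset.mem_singleton] at hn
      rcases Nat.exists_eq_succ_of_ne_zero hn with ⟨k, rfl⟩
      simp
    · exact (hlogsum z hz hz0).summable
  obtain ⟨S, hSa, hSsum, hSd1, hSd2⟩ := aux_series c hsummable
  have hS0 : S 0 = 0 := by
    have h1 := hSsum 0 hb0
    have h2 : (fun n => c n * (0:ℂ) ^ n) = fun _ => (0:ℂ) := by
      funext n
      rcases Nat.eq_zero_or_pos n with rfl | hn
      · simp [hcdef]
      · simp [Nat.pos_iff_ne_zero.mp hn, zero_pow (Nat.pos_iff_ne_zero.mp hn)]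
    rw [h2] at h1
    exact h1.unique hasSum_zero
  have hSlog : ∀ z ∈ ball (0:ℂ) 1, z ≠ 0 → S z = Complex.log (f z / z) := by
    intro z hz hz0
    exact (hSsum z hz).unique (hlogsum z hz hz0)
  -- f z = z * exp (S z)
  have hfzS : ∀ z ∈ ball (0:ℂ) 1, f z = z * Complex.exp (S z) := by
    intro z hz
    rcases eq_or_ne z 0 with rfl | hz0
    · simp [hf0]
    · rw [hSlog z hz hz0, Complex.exp_log (div_ne_zero (hfz z hz hz0) hz0)]
      field_simp
  set S' := deriv S with hS'def
  have hS'a : AnalyticOnNhd ℂ S' (ball 0 1) := hSa.deriv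
  set S'' := deriv S' with hS''def
  have hS''a : AnalyticOnNhd ℂ S'' (ball 0 1) := hS'a.deriv
  have hderivf : ∀ z ∈ ball (0:ℂ) 1, deriv f z = Complex.exp (S z) * (1 + z * S' z) := by
    intro z hz
    have hev : f =ᶠ[nhds z] fun w => w * Complex.exp (S w) :=
      Filter.eventuallyEq_of_mem (isOpen_ball.mem_nhds hz) hfzS
    have hder : HasDerivAt (fun w => w * Complex.exp (S w))
        (1 * Complex.exp (S z) + z * (Complex.exp (S z) * S' z)) z :=
      (hasDerivAt_id z).mul ((hSa z hz).differentiableAt.hasDerivAt.cexp)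
    rw [hev.deriv_eq, hder.deriv]
    ring
  -- the function W
  set W : ℂ → ℂ := fun z => Complex.exp (-(a:ℂ) * S z) * (1 + z * S' z) - 1 with hWdef
  have hWa : AnalyticOnNhd ℂ W (ball 0 1) := by
    intro z hz
    have hid : AnalyticAt ℂ (fun w : ℂ => w) z := analyticAt_id
    exact (((analyticAt_const.mul (hSa z hz)).cexp).mul
      (analyticAt_const.add (hid.mul (hS'a z hz)))).sub analyticAt_const
  have hW0 : W 0 = 0 := by simp [hWdef, hS0]
  -- pointwise strict bound away from the branch cut
  have hWlt : ∀ z ∈ ball (0:ℂ) 1, z ≠ 0 → (S z).im ≠ Real.pi → ‖W z‖ < l := by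
    intro z hz hz0 him
    have hfz' := hfz z hz hz0
    have hfdiv : f z / z ≠ 0 := div_ne_zero hfz' hz0
    have hzf : z / f z = Complex.exp (-S z) := by
      rw [Complex.exp_neg, hfzS z hz]
      rw [eq_comm, inv_eq_iff_eq_inv, eq_comm, inv_div]
      rw [mul_comm, mul_div_assoc, div_self hz0, mul_one]
    have hIm1 : -Real.pi < (S z).im := by
      rw [hSlog z hz hz0, Complex.log_im]
      exact Complex.neg_pi_lt_arg _
    have hIm2 : (S z).im < Real.pi := by
      refine lt_of_le_of_ne ?_ him
      rw [hSlog z hz hz0, Complex.log_im]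
      exact Complex.arg_le_pi _
    have hcpow : (Complex.exp (-S z)) ^ ((1:ℂ) + (a:ℂ))
        = Complex.exp (((1:ℂ) + (a:ℂ)) * (-S z)) := by
      rw [Complex.cpow_def_of_ne_zero (Complex.exp_ne_zero _)]
      rw [Complex.log_exp (by simp only [Complex.neg_im]; linarith)
        (by simp only [Complex.neg_im]; linarith)]
      ring_nf
    have h := hfb z hz hz0
    rw [hzf, hcpow, hderivf z hz] at h
    have key : Complex.exp (((1:ℂ) + (a:ℂ)) * (-S z)) * (Complex.exp (S z) * (1 + z * S' z))
        = Complex.exp (-(a:ℂ) * S z) * (1 + z * S' z) := by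
      rw [← mul_assoc, ← Complex.exp_add]
      have : ((1:ℂ) + (a:ℂ)) * (-S z) + S z = -(a:ℂ) * S z := by ring
      rw [this]
    rwa [key] at h
  -- global bound on W via the open mapping theorem
  have hWb : ∀ z ∈ ball (0:ℂ) 1, ‖W z‖ ≤ l := by
    by_contra hcon
    push_neg at hcon
    obtain ⟨z₀, hz₀b, hz₀⟩ := hcon
    set T : Set ℂ := {z | z ∈ ball (0:ℂ) 1 ∧ l < ‖W z‖} with hTdef
    have hTopen : IsOpen T := by
      have he : T = ball (0:ℂ) 1 ∩ (fun z => ‖W z‖) ⁻¹' (Ioi l) := by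
        ext w; simp [hTdef]
      rw [he]
      exact ContinuousOn.isOpen_inter_preimage (hWa.continuousOn.norm) isOpen_ball isOpen_Ioi
    have hz₀T : z₀ ∈ T := ⟨hz₀b, hz₀⟩
    have hTIm : ∀ z ∈ T, (S z).im = Real.pi := by
      rintro z ⟨hzb, hzl⟩
      by_contra him
      have hz0 : z ≠ 0 := by
        rintro rfl
        rw [hW0, norm_zero] at hzl
        linarith
      have := hWlt z hzb hz0 him
      linarith
    rcases hSa.is_constant_or_isOpen (convex_ball (0:ℂ) 1).isPreconnected with ⟨w, hw⟩ | hopen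
    · have h1 := hw 0 hb0
      have h2 := hw z₀ hz₀b
      have h3 := hTIm z₀ hz₀T
      rw [h2, ← h1, hS0] at h3
      simp at h3
      exact Real.pi_ne_zero h3.symm
    · have himg : IsOpen (S '' T) := hopen T (fun z hz => hz.1) hTopen
      obtain ⟨ε, hε, hball⟩ := Metric.isOpen_iff.mp himg _ ⟨z₀, hz₀T, rfl⟩
      have hmem2 : S z₀ - Complex.I * ((ε/2 : ℝ) : ℂ) ∈ ball (S z₀) ε := by
        rw [mem_ball, dist_eq_norm]
        have : S z₀ - Complex.I * ((ε/2 : ℝ) : ℂ) - S z₀ = -(Complex.I * ((ε/2 : ℝ) : ℂ)) := by ring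
        rw [this, norm_neg, norm_mul, Complex.norm_I, one_mul, Complex.norm_real,
          Real.norm_eq_abs, abs_of_pos (by linarith)]
        linarith
      obtain ⟨z₁, hz₁T, hz₁⟩ := hball hmem2
      have h1 := hTIm z₁ hz₁T
      have h2 : (S z₁).im = Real.pi - ε/2 := by
        rw [hz₁, Complex.sub_im, hTIm z₀ hz₀T]
        simp
      rw [h1] at h2
      linarith
  -- normalized function ω
  set ω : ℂ → ℂ := fun z => ((l:ℝ):ℂ)⁻¹ * W z with hωdef
  have hωa : AnalyticOnNhd ℂ ω (ball 0 1) := fun z hz => analyticAt_const.mul (hWa z hz)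
  have hω0 : ω 0 = 0 := by rw [hωdef]; simp [hW0]
  have hnorml : ‖((l:ℝ):ℂ)⁻¹‖ = l⁻¹ := by
    rw [norm_inv, Complex.norm_real, Real.norm_eq_abs, abs_of_pos hl]
  have hωb : ∀ z ∈ ball (0:ℂ) 1, ‖ω z‖ ≤ 1 := by
    intro z hz
    rw [hωdef]
    simp only
    rw [norm_mul, hnorml]
    calc l⁻¹ * ‖W z‖ ≤ l⁻¹ * l := mul_le_mul_of_nonneg_left (hWb z hz) (inv_nonneg.mpr hl.le)
      _ = 1 := inv_mul_cancel₀ hl.ne'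
  obtain ⟨hB1, hB2⟩ := schwarz_two ω hωa hω0 hωb
  have hω1 : deriv ω 0 = ((l:ℝ):ℂ)⁻¹ * deriv W 0 := by
    rw [hωdef]; exact deriv_const_mul_field _
  have hω2 : iteratedDeriv 2 ω 0 = ((l:ℝ):ℂ)⁻¹ * iteratedDeriv 2 W 0 := by
    rw [iteratedDeriv_succ, iteratedDeriv_one, iteratedDeriv_succ, iteratedDeriv_one]
    have h1 : deriv ω = fun z => ((l:ℝ):ℂ)⁻¹ * deriv W z := by
      funext z
      rw [hωdef]
      exact deriv_const_mul_field _
    rw [h1]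
    exact deriv_const_mul_field _
  -- derivative formula for W on the ball
  have hdW : ∀ z ∈ ball (0:ℂ) 1, deriv W z
      = Complex.exp (-(a:ℂ) * S z) * (-(a:ℂ) * S' z) * (1 + z * S' z)
        + Complex.exp (-(a:ℂ) * S z) * (0 + (1 * S' z + z * S'' z)) := by
    intro z hz
    have hSd : HasDerivAt S (S' z) z := (hSa z hz).differentiableAt.hasDerivAt
    have hS'd : HasDerivAt S' (S'' z) z := (hS'a z hz).differentiableAt.hasDerivAt
    have hE : HasDerivAt (fun w => Complex.exp (-(a:ℂ) * S w))
        (Complex.exp (-(a:ℂ) * S z) * (-(a:ℂ) * S' z)) z := (hSd.const_mul (-(a:ℂ))).cexp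
    have hQ : HasDerivAt (fun w => (1:ℂ) + w * S' w) (0 + (1 * S' z + z * S'' z)) z :=
      (hasDerivAt_const z (1:ℂ)).add ((hasDerivAt_id z).mul hS'd)
    rw [hWdef]
    exact ((hE.mul hQ).sub_const (1:ℂ)).deriv
  have dW0 : deriv W 0 = ((1:ℂ) - (a:ℂ)) * S' 0 := by
    rw [hdW 0 hb0, hS0]
    simp only [mul_zero, zero_mul, add_zero, zero_add, Complex.exp_zero, one_mul, mul_one]
    ring
  have dW2 : iteratedDeriv 2 W 0 = ((2:ℂ) - (a:ℂ)) * S'' 0 + ((a:ℂ)^2 - 2*(a:ℂ)) * (S' 0)^2 := by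
    have hevW : deriv W =ᶠ[nhds 0] (fun z => Complex.exp (-(a:ℂ) * S z)
        * (((-(a:ℂ) * S' z) * (1 + z * S' z) + S' z) + z * S'' z)) := by
      refine Filter.eventuallyEq_of_mem (isOpen_ball.mem_nhds hb0) (fun z hz => ?_)
      rw [hdW z hz]
      ring
    have hSd : HasDerivAt S (S' 0) 0 := (hSa 0 hb0).differentiableAt.hasDerivAt
    have hS'd : HasDerivAt S' (S'' 0) 0 := (hS'a 0 hb0).differentiableAt.hasDerivAt
    have hS''d : HasDerivAt S'' (deriv S'' 0) 0 := (hS''a 0 hb0).differentiableAt.hasDerivAt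
    have hE : HasDerivAt (fun w => Complex.exp (-(a:ℂ) * S w))
        (Complex.exp (-(a:ℂ) * S 0) * (-(a:ℂ) * S' 0)) 0 := (hSd.const_mul (-(a:ℂ))).cexp
    have h1 : HasDerivAt (fun z => -(a:ℂ) * S' z) (-(a:ℂ) * S'' 0) 0 := hS'd.const_mul _
    have h3 : HasDerivAt (fun z => (1:ℂ) + z * S' z) (0 + (1 * S' 0 + 0 * S'' 0)) 0 :=
      (hasDerivAt_const 0 (1:ℂ)).add ((hasDerivAt_id 0).mul hS'd)
    have hG := hE.mul (((h1.mul h3).add hS'd).add ((hasDerivAt_id 0).mul hS''d))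
    calc iteratedDeriv 2 W 0 = deriv (deriv W) 0 := by
          rw [iteratedDeriv_succ, iteratedDeriv_one]
      _ = deriv (fun z => Complex.exp (-(a:ℂ) * S z)
            * (((-(a:ℂ) * S' z) * (1 + z * S' z) + S' z) + z * S'' z)) 0 := hevW.deriv_eq
      _ = _ := hG.deriv
      _ = ((2:ℂ) - (a:ℂ)) * S'' 0 + ((a:ℂ)^2 - 2*(a:ℂ)) * (S' 0)^2 := by
          rw [hS0]
          simp only [Pi.mul_apply, Pi.add_apply, id_eq, mul_zero, zero_mul, add_zero, zero_add, Complex.exp_zero,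
            one_mul, mul_one]
          ring
  -- identify S'' 0 with 4γ₂
  have hQγ : S'' 0 = 4 * γ 2 := by
    have h1 : iteratedDeriv 2 S 0 = S'' 0 := by
      rw [iteratedDeriv_succ, iteratedDeriv_one, hS''def, hS'def]
    rw [← h1, hSd2]
    simp only [hcdef]
    norm_num
    ring
  -- pass to real inequalities
  set x : ℝ := ‖S' 0‖ with hx
  set g2 : ℝ := ‖γ 2‖ with hg2
  have hnorm1a : ‖(1:ℂ) - (a:ℂ)‖ = 1 - a := by
    rw [show (1:ℂ) - (a:ℂ) = ((1 - a : ℝ) : ℂ) by push_cast; ring, Complex.norm_real,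
      Real.norm_eq_abs, abs_of_pos h1a]
  have hu : ‖deriv ω 0‖ = (1 - a) * x / l := by
    rw [hω1, dW0, norm_mul, norm_mul, hnorml, hnorm1a, hx, div_eq_mul_inv]
    ring
  have hI1 : (1 - a) * x ≤ l := by
    have h := hB1
    rw [hu, div_le_one hl] at h
    exact h
  have hW2n : ‖iteratedDeriv 2 W 0‖ ≤ 2 * (1 - ((1-a)*x/l)^2) * l := by
    have h5 := hB2
    rw [hω2, norm_mul, hnorml, hu] at h5
    have h7 : ‖iteratedDeriv 2 W 0‖ = l * (l⁻¹ * ‖iteratedDeriv 2 W 0‖) := by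
      field_simp
    rw [h7]
    calc l * (l⁻¹ * ‖iteratedDeriv 2 W 0‖) ≤ l * (2 * (1 - ((1-a)*x/l)^2)) :=
          mul_le_mul_of_nonneg_left h5 hl.le
      _ = 2 * (1 - ((1-a)*x/l)^2) * l := by ring
  have e1 : ‖((2:ℂ) - (a:ℂ)) * (4 * γ 2)‖ = (2 - a) * (4 * g2) := by
    rw [norm_mul, norm_mul, show ((2:ℂ) - (a:ℂ)) = ((2 - a : ℝ):ℂ) by push_cast; ring,
      Complex.norm_real, Real.norm_eq_abs, abs_of_pos (by linarith : (0:ℝ) < 2 - a),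
      show ((4:ℂ)) = ((4:ℝ):ℂ) by norm_num, Complex.norm_real, Real.norm_eq_abs]
    rw [abs_of_pos (by norm_num : (0:ℝ) < 4), hg2]
  have e2 : ‖((a:ℂ)^2 - 2*(a:ℂ)) * (S' 0)^2‖ = (2*a - a^2) * x^2 := by
    rw [norm_mul, norm_pow, show ((a:ℂ)^2 - 2*(a:ℂ)) = ((a^2 - 2*a : ℝ):ℂ) by push_cast; ring,
      Complex.norm_real, Real.norm_eq_abs, abs_of_neg (by nlinarith : a^2 - 2*a < 0), hx]
    ring
  have hI2 : (2 - a) * (4 * g2) ≤ 2 * (1 - ((1-a)*x/l)^2) * l + (2*a - a^2) * x^2 := by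
    have hsplit : ((2:ℂ) - (a:ℂ)) * (4 * γ 2)
        = iteratedDeriv 2 W 0 + (-(((a:ℂ)^2 - 2*(a:ℂ)) * (S' 0)^2)) := by
      rw [dW2, hQγ]; ring
    have hXY : ‖((2:ℂ) - (a:ℂ)) * (4 * γ 2)‖
        ≤ ‖iteratedDeriv 2 W 0‖ + ‖((a:ℂ)^2 - 2*(a:ℂ)) * (S' 0)^2‖ := by
      rw [hsplit]
      exact (norm_add_le _ _).trans (by rw [norm_neg])
    rw [e1, e2] at hXY
    linarith [hW2n]
  -- final arithmetic
  have hl1' : 2 * (1 - a)^2 ≤ l * (a * (2 - a)) := by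
    rw [div_le_iff₀ (by nlinarith : (0:ℝ) < a * (2 - a))] at hl₁
    linarith
  rw [le_div_iff₀ (by positivity : (0:ℝ) < 4 * (1 - a)^2)]
  have hx0 : 0 ≤ x := hx ▸ norm_nonneg _
  have hg20 : 0 ≤ g2 := hg2 ▸ norm_nonneg _
  have hx2 : (1-a)^2 * x^2 ≤ l^2 := by
    nlinarith [hI1, mul_nonneg (sub_nonneg.mpr hI1)
      (by positivity : (0:ℝ) ≤ l + (1-a)*x), mul_nonneg h1a.le hx0]
  have hcoef : 0 ≤ a*(2-a)*l - 2*(1-a)^2 := by nlinarith [hl1']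
  have hP : 0 ≤ (a*(2-a)*l - 2*(1-a)^2) * (l^2 - (1-a)^2*x^2) :=
    mul_nonneg hcoef (by linarith)
  have hI2' : (2 - a) * (4*g2) * l^2 ≤ 2*l^3 - 2*(1-a)^2*x^2*l + (2*a - a^2)*x^2*l^2 := by
    have h6 := mul_le_mul_of_nonneg_right hI2 (le_of_lt (mul_pos hl hl))
    calc (2-a)*(4*g2)*l^2 = (2-a)*(4*g2)*(l*l) := by ring
      _ ≤ (2 * (1 - ((1-a)*x/l)^2) * l + (2*a - a^2) * x^2)*(l*l) := h6
      _ = 2*l^3 - 2*(1-a)^2*x^2*l + (2*a-a^2)*x^2*l^2 := by field_simp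
  nlinarith [hI2', hP, hl, hx0, hg20, mul_pos hl hl, sq_nonneg (1-a),
    mul_pos (show (0:ℝ) < 2-a by linarith) (mul_pos hl hl)]
end

section
/- The polynomial q(α)=4−12α−19α²+14α³−2α⁴ has a unique real root α_{1/2}≈0.2512 on the interval (0,1), and for α∈(0,1) the inequality (1−α)(2−α)/(2α(3−α)) ≤ (1−α)/√((1−α)²+α²) holds if and only if q(α) ≤ 0, i.e. if and only if α ≥ α_{1/2}. -/
open Set

noncomputable def qf : ℝ → ℝ := fun x => 4 - 12 * x - 19 * x ^ 2 + 14 * x ^ 3 - 2 * x ^ 4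

lemma qf_cont : Continuous qf := by unfold qf; continuity

lemma qf_anti : StrictAntiOn qf (Icc (0:ℝ) 1) := by
  apply strictAntiOn_of_deriv_neg (convex_Icc 0 1) (qf_cont.continuousOn)
  intro x hx
  rw [interior_Icc] at hx
  have hd : HasDerivAt qf (-12 - 38 * x + 42 * x ^ 2 - 8 * x ^ 3) x := by
    unfold qf
    have := ((((hasDerivAt_id x).const_mul (12:ℝ)).const_sub 4).sub
      (((hasDerivAt_pow 2 x).const_mul (19:ℝ)))).add
      (((hasDerivAt_pow 3 x).const_mul (14:ℝ)))
    have h2 := this.sub (((hasDerivAt_pow 4 x).const_mul (2:ℝ)))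
    refine h2.congr_deriv ?_
    simp only [Nat.reduceSub, Nat.cast_ofNat]
    ring
  rw [hd.deriv]
  nlinarith [hx.1, hx.2, sq_nonneg x, mul_pos hx.1 hx.1]

lemma qf_root : ∃ ah ∈ Ioo (0.2505:ℝ) 0.2519, qf ah = 0 := by
  have h : (0:ℝ) ∈ Ioo (qf 0.2519) (qf 0.2505) := by
    constructor <;> (unfold qf; norm_num)
  have := intermediate_value_Ioo' (by norm_num : (0.2505:ℝ) ≤ 0.2519)
    qf_cont.continuousOn h
  obtain ⟨x, hx, hqx⟩ := this
  exact ⟨x, hx, hqx⟩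

theorem stmt_11 :
    ∃ ah : ℝ, ah ∈ Ioo (0:ℝ) 1 ∧
      4 - 12 * ah - 19 * ah ^ 2 + 14 * ah ^ 3 - 2 * ah ^ 4 = 0 ∧
      (∀ x ∈ Ioo (0:ℝ) 1, 4 - 12 * x - 19 * x ^ 2 + 14 * x ^ 3 - 2 * x ^ 4 = 0 → x = ah) ∧
      |ah - 0.2512| < 0.001 ∧
      ∀ α ∈ Ioo (0:ℝ) 1,
        (((1 - α) * (2 - α) / (2 * α * (3 - α)) ≤ (1 - α) / Real.sqrt ((1 - α) ^ 2 + α ^ 2)) ↔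
          4 - 12 * α - 19 * α ^ 2 + 14 * α ^ 3 - 2 * α ^ 4 ≤ 0) ∧
        ((4 - 12 * α - 19 * α ^ 2 + 14 * α ^ 3 - 2 * α ^ 4 ≤ 0) ↔ ah ≤ α) := by
  obtain ⟨ah, ⟨hl, hr⟩, hq0⟩ := qf_root
  have hah : ah ∈ Ioo (0:ℝ) 1 := ⟨by linarith, by linarith⟩
  have hmemIcc : ah ∈ Icc (0:ℝ) 1 := ⟨by linarith, by linarith⟩
  have huniq : ∀ x ∈ Ioo (0:ℝ) 1, qf x = 0 → x = ah := by
    intro x hx hqx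
    have hxI : x ∈ Icc (0:ℝ) 1 := ⟨le_of_lt hx.1, le_of_lt hx.2⟩
    rcases lt_trichotomy x ah with h | h | h
    · exact absurd (qf_anti hxI hmemIcc h) (by rw [hqx, hq0]; simp)
    · exact h
    · exact absurd (qf_anti hmemIcc hxI h) (by rw [hqx, hq0]; simp)
  have hqle : ∀ α ∈ Ioo (0:ℝ) 1, (qf α ≤ 0 ↔ ah ≤ α) := by
    intro α hα
    have hαI : α ∈ Icc (0:ℝ) 1 := ⟨le_of_lt hα.1, le_of_lt hα.2⟩
    constructor
    · intro h
      by_contra hc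
      push_neg at hc
      have := qf_anti hαI hmemIcc hc
      rw [hq0] at this
      linarith
    · intro h
      rcases eq_or_lt_of_le h with h | h
      · rw [← h]; rw [hq0]
      · have := qf_anti hmemIcc hαI h
        rw [hq0] at this
        linarith
  refine ⟨ah, hah, hq0, huniq, ?_, ?_⟩
  · rw [abs_lt]; constructor <;> linarith
  · intro α hα
    obtain ⟨h0, h1⟩ := hα
    refine ⟨?_, hqle α ⟨h0, h1⟩⟩
    have hs2 : ((1 - α) ^ 2 + α ^ 2) > 0 := by positivity
    have hs : Real.sqrt ((1 - α) ^ 2 + α ^ 2) > 0 := Real.sqrt_pos.mpr hs2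
    have hssq : (Real.sqrt ((1 - α) ^ 2 + α ^ 2)) ^ 2 = (1 - α) ^ 2 + α ^ 2 :=
      Real.sq_sqrt (le_of_lt hs2)
    have hD : (0:ℝ) < 2 * α * (3 - α) := by nlinarith
    rw [div_le_div_iff₀ hD hs]
    set s := Real.sqrt ((1 - α) ^ 2 + α ^ 2) with hsdef
    have h1m : (0:ℝ) < 1 - α := by linarith
    have h2m : (0:ℝ) < 2 - α := by linarith
    have hA : 0 ≤ (1 - α) * (2 - α) * s := by positivity
    have hB : 0 ≤ (1 - α) * (2 * α * (3 - α)) := by positivity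
    constructor
    · intro h
      have key : ((1 - α) * (2 - α) * s) ^ 2 ≤ ((1 - α) * (2 * α * (3 - α))) ^ 2 := by
        nlinarith [h, hA]
      by_contra hc
      push_neg at hc
      nlinarith [key, hssq, mul_pos (mul_pos h1m h1m) hc]
    · intro h
      have key : ((1 - α) * (2 - α) * s) ^ 2 ≤ ((1 - α) * (2 * α * (3 - α))) ^ 2 := by
        nlinarith [hssq, mul_nonneg (mul_nonneg h1m.le h1m.le)
          (by linarith : (0:ℝ) ≤ -(4 - 12 * α - 19 * α ^ 2 + 14 * α ^ 3 - 2 * α ^ 4))]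
      exact (pow_le_pow_iff_left₀ hA hB (by norm_num)).mp key
end

section
/- The polynomial r(α)=3−9α+9α²−5α³ has a unique real root α_ν≈0.5337 on the interval (0,1), and for α∈(0,1) the inequality √(3(1−α)³/(α²(3−α))) ≤ (1−α)/√((1−α)²+α²) holds if and only if r(α) ≤ 0, i.e. if and only if α ≥ α_ν. -/
open Set

private lemma r_strictAnti :
    StrictAnti (fun x : ℝ => 3 - 9 * x + 9 * x ^ 2 - 5 * x ^ 3) := by
  apply strictAnti_of_hasDerivAt_neg (f' := fun x : ℝ => -9 + 18 * x - 15 * x ^ 2)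
  · intro x
    have h : HasDerivAt (fun x : ℝ => 3 - 9 * x + 9 * x ^ 2 - 5 * x ^ 3)
        (0 - 9 * 1 + 9 * (2 * x ^ 1) - 5 * (3 * x ^ 2)) x := by
      exact ((((hasDerivAt_const x (3:ℝ)).sub ((hasDerivAt_id x).const_mul 9)).add
        ((hasDerivAt_pow 2 x).const_mul 9)).sub ((hasDerivAt_pow 3 x).const_mul 5))
    convert h using 1; ring
  · intro x; nlinarith [sq_nonneg (x - 3/5)]

theorem stmt_12 :
    ∃ aν : ℝ, aν ∈ Ioo (0:ℝ) 1 ∧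
      3 - 9 * aν + 9 * aν ^ 2 - 5 * aν ^ 3 = 0 ∧
      (∀ x ∈ Ioo (0:ℝ) 1, 3 - 9 * x + 9 * x ^ 2 - 5 * x ^ 3 = 0 → x = aν) ∧
      |aν - 0.5337| < 0.001 ∧
      ∀ α ∈ Ioo (0:ℝ) 1,
        ((Real.sqrt (3 * (1 - α) ^ 3 / (α ^ 2 * (3 - α))) ≤
            (1 - α) / Real.sqrt ((1 - α) ^ 2 + α ^ 2)) ↔
          3 - 9 * α + 9 * α ^ 2 - 5 * α ^ 3 ≤ 0) ∧
        ((3 - 9 * α + 9 * α ^ 2 - 5 * α ^ 3 ≤ 0) ↔ aν ≤ α) := by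
  set r : ℝ → ℝ := fun x => 3 - 9 * x + 9 * x ^ 2 - 5 * x ^ 3 with hr
  have hanti : StrictAnti r := r_strictAnti
  have hcont : ContinuousOn r (Icc (0:ℝ) 1) := by
    apply Continuous.continuousOn; fun_prop
  -- existence of root in (0,1)
  have hmem : (0:ℝ) ∈ Ioo (r 1) (r 0) := by
    simp only [hr]; norm_num
  obtain ⟨a, ha, hra⟩ := intermediate_value_Ioo' (by norm_num : (0:ℝ) ≤ 1) hcont hmem
  refine ⟨a, ha, hra, ?_, ?_, ?_⟩
  · intro x hx hrx
    by_contra hne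
    rcases lt_or_gt_of_ne hne with h | h
    · have h2 := hanti h; rw [hra, show r x = 0 from hrx] at h2; exact lt_irrefl _ h2
    · have h2 := hanti h; rw [show r x = 0 from hrx, hra] at h2; exact lt_irrefl _ h2
  · -- numerical bound
    have h1 : a < 0.5347 := by
      by_contra h
      push_neg at h
      rcases eq_or_lt_of_le h with h | h
      · have : r 0.5347 < 0 := by simp only [hr]; norm_num
        rw [h, hra] at this; norm_num at this
      · have := hanti h
        rw [hra] at this
        have : r 0.5347 > 0 := this
        simp only [hr] at this; norm_num at this
    have h2 : 0.5327 < a := by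
      by_contra h
      push_neg at h
      rcases eq_or_lt_of_le h with h | h
      · have : r 0.5327 > 0 := by simp only [hr]; norm_num
        rw [← h, hra] at this; norm_num at this
      · have := hanti h
        rw [hra] at this
        have : r 0.5327 < 0 := this
        simp only [hr] at this; norm_num at this
    rw [abs_lt]; constructor <;> nlinarith
  · intro α hα
    obtain ⟨hα0, hα1⟩ := hα
    have h1α : 0 < 1 - α := by linarith
    have h3α : 0 < 3 - α := by linarith
    have hD : 0 < (1 - α) ^ 2 + α ^ 2 := by positivity
    constructor
    · -- sqrt inequality iff r α ≤ 0
      have hrhs : (1 - α) / Real.sqrt ((1 - α) ^ 2 + α ^ 2) =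
          Real.sqrt ((1 - α) ^ 2 / ((1 - α) ^ 2 + α ^ 2)) := by
        rw [Real.sqrt_div (by positivity), Real.sqrt_sq h1α.le]
      rw [hrhs, Real.sqrt_le_sqrt_iff (by positivity)]
      rw [div_le_div_iff₀ (by positivity) hD]
      constructor
      · intro h; nlinarith [sq_nonneg (1 - α), mul_pos h1α h1α]
      · intro h; nlinarith [sq_nonneg (1 - α), mul_pos h1α h1α]
    · -- r α ≤ 0 ↔ a ≤ α
      rw [show (3 - 9 * α + 9 * α ^ 2 - 5 * α ^ 3 ≤ 0) ↔ r α ≤ r a by rw [hra]]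
      exact hanti.le_iff_ge
end

section
/- Let α_ν≈0.5337 be the unique real root of 3−9α+9α²−5α³=0 on (0,1) and α₂≈0.9555 the unique real root of 11α²−44α+32=0 on (0,1). The function g(α)=√(3(1−α)(3−α))/(2−α) is decreasing on the interval (α_ν,α₂); consequently, for every α∈[α_ν,α₂] and every λ with (1−α)(2−α)/(2α(3−α)) ≤ λ ≤ √(3(1−α)³/(α²(3−α))), the quantities μ = α(3−α)λ/((1−α)(2−α)) and ν = α²(3−α)λ²/(3(1−α)³) satisfy 1/2 ≤ μ ≤ g(α_ν) < 1.27 and (4/27)(1+μ)³ − (1+μ) < 0 < ν ≤ 1. -/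
open Set

private lemma g_eq_aux (x : ℝ) (hx : x ≤ 1) :
    Real.sqrt (3 * (1 - x) * (3 - x)) / (2 - x) = Real.sqrt (3 - 3 / (2 - x) ^ 2) := by
  have h2 : (0:ℝ) < 2 - x := by linarith
  have hn : (0:ℝ) ≤ 3 * (1 - x) * (3 - x) := by nlinarith
  have h1 : Real.sqrt (3 * (1 - x) * (3 - x)) / (2 - x)
      = Real.sqrt (3 * (1 - x) * (3 - x) / (2 - x) ^ 2) := by
    rw [Real.sqrt_div hn, Real.sqrt_sq h2.le]
  rw [h1]
  congr 1
  field_simp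
  ring

set_option maxHeartbeats 1000000 in
theorem stmt_15 (aν a₂ : ℝ)
    (haν : aν ∈ Ioo (0:ℝ) 1 ∧ 3 - 9 * aν + 9 * aν ^ 2 - 5 * aν ^ 3 = 0 ∧
      ∀ x ∈ Ioo (0:ℝ) 1, 3 - 9 * x + 9 * x ^ 2 - 5 * x ^ 3 = 0 → x = aν)
    (ha₂ : a₂ ∈ Ioo (0:ℝ) 1 ∧ 11 * a₂ ^ 2 - 44 * a₂ + 32 = 0 ∧
      ∀ x ∈ Ioo (0:ℝ) 1, 11 * x ^ 2 - 44 * x + 32 = 0 → x = a₂) :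
    StrictAntiOn (fun x : ℝ => Real.sqrt (3 * (1 - x) * (3 - x)) / (2 - x)) (Ioo aν a₂) ∧
    ∀ α ∈ Icc aν a₂, ∀ l : ℝ,
      (1 - α) * (2 - α) / (2 * α * (3 - α)) ≤ l →
      l ≤ Real.sqrt (3 * (1 - α) ^ 3 / (α ^ 2 * (3 - α))) →
      (1 / 2 ≤ α * (3 - α) * l / ((1 - α) * (2 - α)) ∧
       α * (3 - α) * l / ((1 - α) * (2 - α)) ≤
         Real.sqrt (3 * (1 - aν) * (3 - aν)) / (2 - aν) ∧
       Real.sqrt (3 * (1 - aν) * (3 - aν)) / (2 - aν) < 1.27) ∧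
      (4 / 27 * (1 + α * (3 - α) * l / ((1 - α) * (2 - α))) ^ 3 -
          (1 + α * (3 - α) * l / ((1 - α) * (2 - α))) < 0 ∧
       0 < α ^ 2 * (3 - α) * l ^ 2 / (3 * (1 - α) ^ 3) ∧
       α ^ 2 * (3 - α) * l ^ 2 / (3 * (1 - α) ^ 3) ≤ 1) := by
  obtain ⟨⟨haν0, haν1⟩, haνp, haνu⟩ := haν
  obtain ⟨⟨ha₂0, ha₂1⟩, -, -⟩ := ha₂
  -- lower numerical bound on aν
  have hbound : (133:ℝ)/250 < aν := by
    have hcont : ContinuousOn (fun x : ℝ => 3 - 9*x + 9*x^2 - 5*x^3) (Icc (133/250) 1) := by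
      fun_prop
    have hiv := intermediate_value_Ioo' (by norm_num : (133:ℝ)/250 ≤ 1) hcont
    have h0 : (0:ℝ) ∈ Ioo ((fun x : ℝ => 3 - 9*x + 9*x^2 - 5*x^3) 1)
        ((fun x : ℝ => 3 - 9*x + 9*x^2 - 5*x^3) (133/250)) := by
      constructor <;> norm_num
    obtain ⟨r, hr, hr0⟩ := hiv h0
    have hr01 : r ∈ Ioo (0:ℝ) 1 := ⟨by have := hr.1; linarith [hr.1], hr.2⟩
    have hreq : r = aν := haνu r hr01 (by simpa using hr0)
    exact hreq ▸ hr.1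
  -- 1.27 bound for g(aν)
  have h2aν : (0:ℝ) < 2 - aν := by linarith
  have hg127 : Real.sqrt (3 * (1 - aν) * (3 - aν)) / (2 - aν) < 1.27 := by
    rw [div_lt_iff₀ h2aν]
    rw [show (1.27 : ℝ) * (2 - aν) = 1.27 * (2 - aν) from rfl]
    have hpos : (0:ℝ) < 1.27 * (2 - aν) := by norm_num; linarith
    rw [Real.sqrt_lt' hpos]
    nlinarith [mul_pos (sub_pos.mpr hbound) (sub_pos.mpr haν1)]
  constructor
  · -- strict antitonicity
    intro x hx y hy hxy
    simp only
    have hx1 : x ≤ 1 := by linarith [hx.2]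
    have hy1 : y < 1 := by linarith [hy.2]
    rw [g_eq_aux x hx1, g_eq_aux y hy1.le]
    have h2y : (1:ℝ) < 2 - y := by linarith
    have h2x : (0:ℝ) < 2 - x := by linarith
    have hsq : (2 - y)^2 < (2 - x)^2 := by nlinarith
    have hdiv : 3 / (2 - x)^2 < 3 / (2 - y)^2 :=
      div_lt_div_of_pos_left (by norm_num) (by positivity) hsq
    apply Real.sqrt_lt_sqrt
    · have : 3 / (2 - y)^2 < 3 := by
        rw [div_lt_iff₀ (by positivity)]; nlinarith
      linarith
    · linarith
  · intro α hα l hl1 hl2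
    have hα0 : 0 < α := lt_of_lt_of_le haν0 hα.1
    have hα1 : α < 1 := lt_of_le_of_lt hα.2 ha₂1
    have h1α : (0:ℝ) < 1 - α := by linarith
    have h2α : (0:ℝ) < 2 - α := by linarith
    have h3α : (0:ℝ) < 3 - α := by linarith
    have hB : (0:ℝ) < (1 - α) * (2 - α) := mul_pos h1α h2α
    have hl0 : 0 < l :=
      lt_of_lt_of_le (by positivity) hl1
    -- l^2 ≤ X
    have hX0 : (0:ℝ) ≤ 3 * (1 - α) ^ 3 / (α ^ 2 * (3 - α)) := by positivity
    have hl2sq : l^2 ≤ 3 * (1 - α) ^ 3 / (α ^ 2 * (3 - α)) := by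
      have h := mul_self_le_mul_self hl0.le hl2
      rw [Real.mul_self_sqrt hX0] at h
      nlinarith [h]
    -- μ lower bound
    have hmul : 1 / 2 ≤ α * (3 - α) * l / ((1 - α) * (2 - α)) := by
      rw [le_div_iff₀ hB]
      have h := (div_le_iff₀ (by positivity : (0:ℝ) < 2 * α * (3 - α))).mp hl1
      nlinarith
    -- μ ≤ g(α)
    have hmugα : α * (3 - α) * l / ((1 - α) * (2 - α)) ≤
        Real.sqrt (3 * (1 - α) * (3 - α)) / (2 - α) := by
      have step1 : α * (3 - α) * l / ((1 - α) * (2 - α)) ≤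
          α * (3 - α) * Real.sqrt (3 * (1 - α) ^ 3 / (α ^ 2 * (3 - α))) / ((1 - α) * (2 - α)) := by
        gcongr
      refine step1.trans_eq ?_
      have hC : (0:ℝ) ≤ α * (3 - α) / ((1 - α) * (2 - α)) := by positivity
      have hn : (0:ℝ) ≤ 3 * (1 - α) * (3 - α) := by positivity
      calc α * (3 - α) * Real.sqrt (3 * (1 - α) ^ 3 / (α ^ 2 * (3 - α))) / ((1 - α) * (2 - α))
          = (α * (3 - α) / ((1 - α) * (2 - α))) *
            Real.sqrt (3 * (1 - α) ^ 3 / (α ^ 2 * (3 - α))) := by ring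
        _ = Real.sqrt ((α * (3 - α) / ((1 - α) * (2 - α)))^2) *
            Real.sqrt (3 * (1 - α) ^ 3 / (α ^ 2 * (3 - α))) := by rw [Real.sqrt_sq hC]
        _ = Real.sqrt ((α * (3 - α) / ((1 - α) * (2 - α)))^2 *
            (3 * (1 - α) ^ 3 / (α ^ 2 * (3 - α)))) := (Real.sqrt_mul (sq_nonneg _) _).symm
        _ = Real.sqrt (3 * (1 - α) * (3 - α) / (2 - α)^2) := by
            congr 1
            field_simp
        _ = Real.sqrt (3 * (1 - α) * (3 - α)) / (2 - α) := by
            rw [Real.sqrt_div hn, Real.sqrt_sq h2α.le]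
    -- g(α) ≤ g(aν)
    have hganti : Real.sqrt (3 * (1 - α) * (3 - α)) / (2 - α) ≤
        Real.sqrt (3 * (1 - aν) * (3 - aν)) / (2 - aν) := by
      rw [g_eq_aux α hα1.le, g_eq_aux aν haν1.le]
      apply Real.sqrt_le_sqrt
      have hsq : (2 - α)^2 ≤ (2 - aν)^2 := by nlinarith [hα.1]
      have h := div_le_div_of_nonneg_left (by norm_num : (0:ℝ) ≤ 3)
        (by positivity : (0:ℝ) < (2 - α)^2) hsq
      linarith
    have hmug : α * (3 - α) * l / ((1 - α) * (2 - α)) ≤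
        Real.sqrt (3 * (1 - aν) * (3 - aν)) / (2 - aν) := hmugα.trans hganti
    have hmu127 : α * (3 - α) * l / ((1 - α) * (2 - α)) < 1.27 := lt_of_le_of_lt hmug hg127
    refine ⟨⟨hmul, hmug, hg127⟩, ?_, ?_, ?_⟩
    · have key : ∀ u : ℝ, 1/2 ≤ u → u < 1.27 → 4/27*(1+u)^3 - (1+u) < 0 := by
        intro u h1 h2
        have h3 : (0:ℝ) < 1 + u := by linarith
        have h4 : (1+u)^2 < (227/100)^2 := by norm_num at h2; nlinarith
        nlinarith [mul_pos h3 h3, mul_pos (mul_pos h3 h3) h3]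
      exact key _ hmul hmu127
    · exact div_pos (mul_pos (mul_pos (pow_pos hα0 2) h3α) (pow_pos hl0 2)) (by positivity)
    · rw [div_le_one (by positivity)]
      have h := (le_div_iff₀ (by positivity : (0:ℝ) < α ^ 2 * (3 - α))).mp hl2sq
      nlinarith [h]
end

section
/- Let 0<α<1 and 0<λ≤λ⋆=(1−α)/√((1−α)²+α²). The function f₁(z) = z(1 − (αλ/(1−α))z)^{−1/α} (principal branch) belongs to U(α,λ), and its logarithmic coefficients satisfy γ₁ = λ/(2(1−α)), γ₂ = αλ²/(4(1−α)²), and γ₃ = α²λ³/(6(1−α)³). In particular, the bounds |γ₁| ≤ λ/(2(1−α)), |γ₂| ≤ αλ²/(4(1−α)²), and |γ₃| ≤ α²λ³/(6(1−α)³) of the main theorem are attained, hence sharp. -/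
open Complex Metric Set

private lemma arcsin_le_halfpi_mul {r : ℝ} (h0 : 0 ≤ r) (h1 : r ≤ 1) :
    Real.arcsin r ≤ Real.pi / 2 * r := by
  have hs : Real.sin (Real.arcsin r) = r := Real.sin_arcsin (by linarith) h1
  have h2 := Real.mul_le_sin (Real.arcsin_nonneg.2 h0) (Real.arcsin_le_pi_div_two r)
  rw [hs] at h2
  have hpi := Real.pi_pos
  have h3 := mul_le_mul_of_nonneg_left h2 (by positivity : (0:ℝ) ≤ Real.pi / 2)
  have h4 : Real.pi / 2 * (2 / Real.pi * Real.arcsin r) = Real.arcsin r := by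
    field_simp
  linarith

private lemma abs_arcsin' (x : ℝ) : |Real.arcsin x| = Real.arcsin |x| := by
  rcases le_or_gt 0 x with h | h
  · rw [_root_.abs_of_nonneg h, _root_.abs_of_nonneg (Real.arcsin_nonneg.2 h)]
  · rw [_root_.abs_of_neg h, Real.arcsin_neg, _root_.abs_of_nonpos]
    rw [← Real.arcsin_zero]
    exact Real.monotone_arcsin h.le

private lemma abs_arg_one_sub_le {r : ℝ} (h0 : 0 ≤ r) (h1 : r < 1) {u : ℂ} (hu : ‖u‖ ≤ r) :
    |Complex.arg (1 - u)| ≤ Real.pi / 2 * r := by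
  set w : ℂ := 1 - u with hw
  have hu' : ‖u‖ ≤ r := hu
  have hren : |u.re| ≤ r := (Complex.abs_re_le_norm u).trans hu
  have hre : 0 < w.re := by
    have := abs_le.1 hren
    simp only [hw, Complex.sub_re, Complex.one_re]
    linarith
  have hw0 : w ≠ 0 := by
    intro h; rw [h] at hre; simp at hre
  have haw : 0 < ‖w‖ := norm_pos_iff.mpr hw0
  have hsqu : u.re ^ 2 + u.im ^ 2 ≤ r ^ 2 := by
    have h := Complex.sq_norm u
    rw [Complex.normSq_apply] at h
    nlinarith [norm_nonneg u]
  have hr21 : r ^ 2 ≤ 1 := by nlinarith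
  have hsq : w.im ^ 2 ≤ r ^ 2 * ‖w‖ ^ 2 := by
    have habs : ‖w‖ ^ 2 = w.re ^ 2 + w.im ^ 2 := by
      rw [Complex.sq_norm, Complex.normSq_apply]; ring
    have hwre : w.re = 1 - u.re := by simp [hw]
    have hwim : w.im = -u.im := by simp [hw]
    rw [habs, hwre, hwim]
    nlinarith [sq_nonneg (u.re - r ^ 2),
      mul_nonneg (sub_nonneg.2 hr21) (sub_nonneg.2 hsqu)]
  have him : |w.im| ≤ r * ‖w‖ := by
    have h := Real.sqrt_le_sqrt hsq
    rwa [Real.sqrt_sq_eq_abs, ← mul_pow, Real.sqrt_sq (by positivity)] at h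
  rw [Complex.arg_of_re_nonneg hre.le, abs_arcsin']
  calc Real.arcsin |w.im / ‖w‖|
      ≤ Real.arcsin r := by
        apply Real.monotone_arcsin
        rw [abs_div, _root_.abs_of_pos haw, div_le_iff₀ haw]; exact him
    _ ≤ Real.pi / 2 * r := arcsin_le_halfpi_mul h0 h1.le

private lemma zero_coeff {d : ℕ → ℂ}
    (h : ∀ z : ℂ, ‖z‖ < 1 → HasSum (fun n => d n * z ^ n) 0) :
    ∀ n, d n = 0 := by
  set p := FormalMultilinearSeries.ofScalars ℂ d with hp
  have hz : ‖((1/2 : ℝ) : ℂ)‖ = 1/2 := by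
    rw [Complex.norm_real]; norm_num
  have hsum : Summable fun n => d n * ((1/2 : ℝ) : ℂ) ^ n :=
    (h _ (by rw [hz]; norm_num)).summable
  have ht : Filter.Tendsto (fun n => ‖d n‖ * (1/2 : ℝ) ^ n) Filter.atTop (nhds 0) := by
    have := hsum.tendsto_atTop_zero.norm
    simp only [norm_mul, norm_pow, hz, norm_zero] at this
    exact this
  obtain ⟨C, hC⟩ := ht.bddAbove_range
  have hrad : ((1/2 : NNReal) : ENNReal) ≤ p.radius := by
    apply p.le_radius_of_bound C
    intro n
    have h1 : ‖p n‖ = ‖d n‖ := FormalMultilinearSeries.ofScalars_norm ℂ d n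
    have h2 := hC ⟨n, rfl⟩
    have h3 : ((1/2 : NNReal) : ℝ) = 1/2 := by norm_num
    rw [h1, h3]
    exact h2
  have hball : HasFPowerSeriesOnBall (0 : ℂ → ℂ) p 0 ((1/2 : NNReal) : ENNReal) := by
    refine ⟨hrad, by norm_num, fun {y} hy => ?_⟩
    have hy' : ‖y‖ < 1 := by
      rw [mem_emetric_ball_zero_iff] at hy
      have := ENNReal.coe_lt_coe.1 hy
      have h3 : ‖y‖ < (1/2 : ℝ) := by exact_mod_cast this
      linarith
    have := h y hy'
    simp only [Pi.zero_apply]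
    have hfun : (fun n => p n (fun _ => y)) = fun n => d n * y ^ n := by
      funext n
      rw [FormalMultilinearSeries.ofScalars_apply_eq, smul_eq_mul]
    rw [hfun]
    exact this
  have hp0 : p = 0 := hball.hasFPowerSeriesAt.eq_zero
  intro n
  exact (FormalMultilinearSeries.ofScalars_eq_zero ℂ n).1 (by rw [← hp, hp0]; rfl)

theorem stmt_17 (a l : ℝ) (ha : a ∈ Ioo (0:ℝ) 1) (hl : 0 < l)
    (hls : l ≤ (1 - a) / Real.sqrt ((1 - a) ^ 2 + a ^ 2)) :
    (fun z : ℂ => z * (1 - ((a * l / (1 - a) : ℝ) : ℂ) * z) ^ (-(1:ℂ) / (a:ℂ)))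
      ∈ UClass a l ∧
    ∀ γ : ℕ → ℂ,
      IsLogCoeff (fun z : ℂ => z * (1 - ((a * l / (1 - a) : ℝ) : ℂ) * z) ^ (-(1:ℂ) / (a:ℂ))) γ →
      γ 1 = ((l / (2 * (1 - a)) : ℝ) : ℂ) ∧
      γ 2 = ((a * l ^ 2 / (4 * (1 - a) ^ 2) : ℝ) : ℂ) ∧
      γ 3 = ((a ^ 2 * l ^ 3 / (6 * (1 - a) ^ 3) : ℝ) : ℂ) := by
  obtain ⟨ha0, ha1⟩ := ha
  have h1a : 0 < 1 - a := by linarith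
  set c : ℝ := a * l / (1 - a) with hcdef
  have hc0 : 0 < c := by positivity
  have hSpos : 0 < Real.sqrt ((1 - a) ^ 2 + a ^ 2) := Real.sqrt_pos.2 (by positivity)
  have hSsq : Real.sqrt ((1 - a) ^ 2 + a ^ 2) ^ 2 = (1 - a) ^ 2 + a ^ 2 :=
    Real.sq_sqrt (by positivity)
  have hl2 : l < 2 * (1 - a) := by
    have h2 : (1/2 : ℝ) < Real.sqrt ((1 - a) ^ 2 + a ^ 2) := by
      nlinarith [sq_nonneg (1 - 2*a)]
    have h3 : (1 - a) / Real.sqrt ((1 - a) ^ 2 + a ^ 2) < 2 * (1 - a) := by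
      rw [div_lt_iff₀ hSpos]; nlinarith
    linarith
  have hc2a : c < 2 * a := by
    rw [hcdef, div_lt_iff₀ h1a]; nlinarith
  have haS : a < Real.sqrt ((1 - a) ^ 2 + a ^ 2) := by
    nlinarith [sq_nonneg (1 - a)]
  have hlS : l * Real.sqrt ((1 - a) ^ 2 + a ^ 2) ≤ 1 - a := (le_div_iff₀ hSpos).1 hls
  have hc1 : c < 1 := by
    rw [hcdef, div_lt_one h1a]
    nlinarith [mul_lt_mul_of_pos_right haS hl]
  have hcl : c * (1 - a) = a * l := by
    rw [hcdef]; field_simp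
  -- complex setup
  set m : ℂ := -(1:ℂ)/(a:ℂ) with hm
  have haC : (a : ℂ) ≠ 0 := by simpa using ha0.ne'
  have hmr : m = ((-(1/a) : ℝ) : ℂ) := by rw [hm]; push_cast; ring
  have hfacts : ∀ z : ℂ, ‖z‖ < 1 →
      ‖(c:ℂ) * z‖ ≤ c ∧ ‖(c:ℂ) * z‖ < 1 ∧ 0 < (1 - (c:ℂ)*z).re ∧ (1 - (c:ℂ)*z) ≠ 0 ∧
      |(1 - (c:ℂ)*z).arg| < a * Real.pi := by
    intro z hz
    have hn : ‖(c:ℂ) * z‖ = c * ‖z‖ := by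
      rw [norm_mul, Complex.norm_real, Real.norm_eq_abs, abs_of_pos hc0]
    have h1 : ‖(c:ℂ) * z‖ ≤ c := by
      rw [hn]; nlinarith
    have h2 : ‖(c:ℂ) * z‖ < 1 := lt_of_le_of_lt h1 hc1
    have h3 : 0 < (1 - (c:ℂ)*z).re := by
      have h := (Complex.abs_re_le_norm ((c:ℂ)*z)).trans_lt h2
      have h' := (abs_lt.1 h).2
      simp only [Complex.sub_re, Complex.one_re]
      linarith
    have h4 : (1 - (c:ℂ)*z) ≠ 0 := by
      intro h; rw [h] at h3; simp at h3
    have h5 : |(1 - (c:ℂ)*z).arg| < a * Real.pi := by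
      have := abs_arg_one_sub_le hc0.le hc1 h1
      have hpi := Real.pi_pos
      nlinarith
    exact ⟨h1, h2, h3, h4, h5⟩
  have him : ∀ z : ℂ, ‖z‖ < 1 → |(Complex.log (1 - (c:ℂ)*z) * m).im| < Real.pi := by
    intro z hz
    obtain ⟨-, -, -, -, h5⟩ := hfacts z hz
    have heq : (Complex.log (1 - (c:ℂ)*z) * m).im = (1 - (c:ℂ)*z).arg * (-(1/a)) := by
      rw [hmr, Complex.mul_im, Complex.ofReal_im, Complex.ofReal_re, Complex.log_im]
      ring
    rw [heq, abs_mul, abs_neg, _root_.abs_of_nonneg (by positivity : (0:ℝ) ≤ 1/a)]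
    have h6 : a * Real.pi * (1/a) = Real.pi := by field_simp
    have h7 := mul_lt_mul_of_pos_right h5 (by positivity : (0:ℝ) < 1/a)
    linarith
  have hslit : ∀ z : ℂ, ‖z‖ < 1 → (1 - (c:ℂ)*z) ∈ Complex.slitPlane := by
    intro z hz
    exact Complex.mem_slitPlane_iff.2 (Or.inl (hfacts z hz).2.2.1)
  have hD : ∀ z : ℂ, ‖z‖ < 1 → HasDerivAt (fun z : ℂ => z * (1 - (c:ℂ)*z) ^ m)
      ((1 - (c:ℂ)*z) ^ m + z * (m * (1 - (c:ℂ)*z) ^ (m-1) * (-(c:ℂ)))) z := by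
    intro z hz
    have hw : HasDerivAt (fun z : ℂ => 1 - (c:ℂ)*z) (-(c:ℂ)) z := by
      simpa using ((hasDerivAt_id z).const_mul ((c:ℂ))).const_sub 1
    have hg := HasDerivAt.cpow_const hw (hslit z hz) (c := m)
    have h2 : HasDerivAt (fun y : ℂ => y * (1 - (c:ℂ)*y) ^ m) _ z := (hasDerivAt_id' z).mul hg
    simpa using h2
  constructor
  · -- membership in UClass
    refine ⟨?_, ?_, ?_, ?_⟩
    · intro z hz
      rw [mem_ball_zero_iff] at hz
      exact (analyticAt_id).mul
        ((analyticAt_const.sub (analyticAt_const.mul analyticAt_id)).cpow analyticAt_const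
          (hslit z hz))
    · simp
    · have h := (hD 0 (by simp)).deriv
      rw [h]
      simp [Complex.one_cpow]
    · intro z hzb hz0
      rw [mem_ball_zero_iff] at hzb
      obtain ⟨h1, h2, h3, hw0, h5⟩ := hfacts z hzb
      set w : ℂ := 1 - (c:ℂ)*z with hwdef
      have hWm0 : w ^ m ≠ 0 := by
        simp [Complex.cpow_eq_zero_iff, hw0]
      have hfz : (fun z : ℂ => z * (1 - (c:ℂ)*z) ^ m) z = z * w ^ m := rfl
      have hdiv : z / (z * w ^ m) = w ^ (-m) := by
        rw [Complex.cpow_neg]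
        field_simp
      have hpow : (w ^ (-m)) ^ ((1:ℂ) + (a:ℂ)) = w ^ (-m * ((1:ℂ) + (a:ℂ))) := by
        rw [← Complex.cpow_mul]
        · have hmi := him z hzb
          have heq : (Complex.log w * -m).im = -((Complex.log w * m).im) := by
            simp [mul_neg]
          rw [heq]
          have := abs_lt.1 hmi
          linarith [this.1, this.2]
        · have hmi := him z hzb
          have heq : (Complex.log w * -m).im = -((Complex.log w * m).im) := by
            simp [mul_neg]
          rw [heq]
          have := abs_lt.1 hmi
          linarith [this.1, this.2]
      have hder : deriv (fun z : ℂ => z * (1 - (c:ℂ)*z) ^ m) z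
          = w ^ m + z * (m * w ^ (m-1) * (-(c:ℂ))) := (hD z hzb).deriv
      have e1 : w ^ (-m * ((1:ℂ) + (a:ℂ))) * w ^ m = w := by
        rw [← Complex.cpow_add _ _ hw0]
        have hexp : -m * ((1:ℂ) + (a:ℂ)) + m = 1 := by
          rw [hm]; field_simp; ring
        rw [hexp, Complex.cpow_one]
      have e2 : w ^ (-m * ((1:ℂ) + (a:ℂ))) * w ^ (m - 1) = 1 := by
        rw [← Complex.cpow_add _ _ hw0]
        have hexp : -m * ((1:ℂ) + (a:ℂ)) + (m - 1) = 0 := by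
          rw [hm]; field_simp; ring
        rw [hexp, Complex.cpow_zero]
      have hclC : (c:ℂ) * (1 - (a:ℂ)) = (a:ℂ) * (l:ℂ) := by
        exact_mod_cast congrArg Complex.ofReal hcl
      have key : (z / (fun z : ℂ => z * (1 - (c:ℂ)*z) ^ m) z) ^ ((1:ℂ) + (a:ℂ))
          * deriv (fun z : ℂ => z * (1 - (c:ℂ)*z) ^ m) z - 1 = (l:ℂ) * z := by
        rw [hfz, hdiv, hpow, hder]
        calc w ^ (-m * ((1:ℂ) + (a:ℂ))) * (w ^ m + z * (m * w ^ (m-1) * (-(c:ℂ)))) - 1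
            = (w ^ (-m * ((1:ℂ) + (a:ℂ))) * w ^ m)
              + z * m * (-(c:ℂ)) * (w ^ (-m * ((1:ℂ) + (a:ℂ))) * w ^ (m-1)) - 1 := by ring
          _ = w + z * m * (-(c:ℂ)) - 1 := by rw [e1, e2]; ring
          _ = (l:ℂ) * z := by
              rw [hwdef, hm]
              field_simp
              linear_combination z * hclC
      rw [key, norm_mul, Complex.norm_real, Real.norm_eq_abs, abs_of_pos hl]
      calc l * ‖z‖ < l * 1 := mul_lt_mul_of_pos_left hzb hl
        _ = l := mul_one l
  · -- log coefficients
    intro γ hγ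
    set δ : ℕ → ℂ := fun n => (c:ℂ)^n / (2 * n * (a:ℂ)) with hδ
    have known : ∀ z : ℂ, ‖z‖ < 1 → z ≠ 0 →
        HasSum (fun n : ℕ => 2 * δ (n + 1) * z ^ (n + 1))
          (Complex.log ((fun z : ℂ => z * (1 - (c:ℂ) * z) ^ m) z / z)) := by
      intro z hz hz0
      obtain ⟨h1, h2, h3, hw0, h5⟩ := hfacts z hz
      have hfz : (fun z : ℂ => z * (1 - (c:ℂ) * z) ^ m) z / z = (1 - (c:ℂ)*z) ^ m := by
        simp only []
        rw [mul_comm, mul_div_assoc, div_self hz0, mul_one]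
      have hlog : Complex.log ((1 - (c:ℂ)*z) ^ m) = Complex.log (1 - (c:ℂ)*z) * m := by
        rw [Complex.cpow_def_of_ne_zero hw0, Complex.log_exp]
        · have := abs_lt.1 (him z hz); linarith [this.1]
        · have := abs_lt.1 (him z hz); linarith [this.2]
      have hts := Complex.hasSum_taylorSeries_neg_log (z := (c:ℂ)*z) h2
      have h4 := hts.mul_left (-m)
      have h6 : -m * -Complex.log (1 - (c:ℂ)*z) = Complex.log (1 - (c:ℂ)*z) * m := by ring
      rw [h6] at h4
      have h7 : HasSum (fun n : ℕ => -m * (((c:ℂ)*z) ^ (n+1) / (n+1)))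
          (Complex.log (1 - (c:ℂ)*z) * m) := by
        have := (hasSum_nat_add_iff
          (f := fun n : ℕ => -m * (((c:ℂ)*z) ^ n / n)) 1).2 (by simpa using h4)
        exact_mod_cast this
      rw [hfz, hlog]
      convert h7 using 2 with n
      rw [hδ, hm]
      have hn1 : ((n:ℂ) + 1) ≠ 0 := Nat.cast_add_one_ne_zero n
      push_cast
      field_simp
      ring
    set d : ℕ → ℂ := fun n => if n = 0 then 0 else 2 * γ n - 2 * δ n with hd
    have hzero : ∀ z : ℂ, ‖z‖ < 1 → HasSum (fun n => d n * z ^ n) 0 := by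
      intro z hz
      by_cases hz0 : z = 0
      · subst hz0
        have heq : (fun n : ℕ => d n * (0:ℂ) ^ n) = fun _ => 0 := by
          funext n
          cases n with
          | zero => simp [hd]
          | succ k => simp
        rw [heq]
        exact hasSum_zero
      · have hA := hγ z (mem_ball_zero_iff.2 hz) hz0
        have hB := known z hz hz0
        have hC := hA.sub hB
        rw [sub_self] at hC
        have h4 : (fun n : ℕ => d (n+1) * z ^ (n+1))
            = fun n : ℕ => 2 * γ (n+1) * z ^ (n+1) - 2 * δ (n+1) * z ^ (n+1) := by
          funext n
          simp only [hd, if_neg (Nat.succ_ne_zero n)]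
          ring
        have h5 := (hasSum_nat_add_iff (f := fun n : ℕ => d n * z ^ n) 1).1 (h4 ▸ hC)
        simpa [hd] using h5
    have hcoeff := zero_coeff hzero
    have hγδ : ∀ n : ℕ, n ≠ 0 → γ n = δ n := by
      intro n hn
      have h := hcoeff n
      rw [hd] at h
      simp only [if_neg hn] at h
      have h2 : 2 * γ n = 2 * δ n := by linear_combination h
      exact mul_left_cancel₀ (two_ne_zero) h2
    have h1aC : ((1:ℂ) - (a:ℂ)) ≠ 0 := by
      have h : ((1 - a : ℝ) : ℂ) ≠ 0 := by exact_mod_cast h1a.ne'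
      push_cast at h
      exact h
    refine ⟨?_, ?_, ?_⟩
    · rw [hγδ 1 one_ne_zero, hδ]
      rw [hcdef]
      push_cast
      field_simp
    · rw [hγδ 2 (by norm_num), hδ]
      rw [hcdef]
      push_cast
      field_simp
      ring
    · rw [hγδ 3 (by norm_num), hδ]
      rw [hcdef]
      push_cast
      field_simp
      ring
end

section
/- Let 0<α<1 and 0<λ≤λ⋆=(1−α)/√((1−α)²+α²). The function f₂(z) = z(1 − (αλ/(2−α))z²)^{−1/α} (principal branch), which corresponds to the Schwarz function ω(z)=z² in the representation (z/f(z))^α = 1 − αλ z^α ∫₀^z ω(t)/t^{α+1} dt, belongs to U(α,λ) and its second logarithmic coefficient equals γ₂ = λ/(2(2−α)). In particular, the bound |γ₂| ≤ λ/(2(2−α)) of the main theorem is attained, hence sharp. -/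
open Complex Metric Set

lemma my_arctan_le_self {t : ℝ} (ht : 0 ≤ t) : Real.arctan t ≤ t := by
  rcases ht.eq_or_lt with h | h
  · simp [← h]
  · have h1 : 0 < Real.arctan t := by simpa using Real.arctan_strictMono h
    have h2 := Real.arctan_lt_pi_div_two t
    have h3 := Real.lt_tan h1 h2
    rw [Real.tan_arctan] at h3
    exact h3.le

lemma my_abs_arctan_le_self (x : ℝ) : |Real.arctan x| ≤ |x| := by
  rcases le_or_gt 0 x with h | h
  · rw [_root_.abs_of_nonneg h, _root_.abs_of_nonneg (by
      rcases h.eq_or_lt with h' | h'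
      · simp [← h']
      · exact (by simpa using Real.arctan_strictMono h' : (0:ℝ) < Real.arctan x).le)]
    exact my_arctan_le_self h
  · have h4 := my_arctan_le_self (neg_nonneg.mpr h.le)
    rw [Real.arctan_neg] at h4
    have h5 : Real.arctan x < 0 := by
      simpa using Real.arctan_strictMono (neg_pos.mpr h)
    rw [_root_.abs_of_neg h, _root_.abs_of_neg h5]; linarith

lemma my_aux_norm {c : ℝ} (hc0 : 0 ≤ c) {z : ℂ} (hz : ‖z‖ < 1) :
    ‖(c:ℂ) * z^2‖ ≤ c := by
  rw [norm_mul, norm_pow, Complex.norm_real, Real.norm_eq_abs, _root_.abs_of_nonneg hc0]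
  nlinarith [norm_nonneg z, sq_nonneg ‖z‖, mul_le_one₀ hz.le (norm_nonneg z) hz.le]

lemma my_aux_re {c : ℝ} (hc0 : 0 ≤ c) (hc : c ≤ 1/2) {z : ℂ} (hz : ‖z‖ < 1) :
    1/2 ≤ (1 - (c:ℂ)*z^2).re := by
  have h := my_aux_norm hc0 hz
  have h2 : |((c:ℂ)*z^2).re| ≤ c := by
    refine le_trans ?_ h
    exact Complex.abs_re_le_norm _
  rw [Complex.sub_re, Complex.one_re]
  have := abs_le.mp h2
  linarith [this.1, this.2]

lemma my_aux_im {c : ℝ} (hc0 : 0 ≤ c) {z : ℂ} (hz : ‖z‖ < 1) :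
    |(1 - (c:ℂ)*z^2).im| ≤ c := by
  have h := my_aux_norm hc0 hz
  rw [Complex.sub_im, Complex.one_im, zero_sub, abs_neg]
  refine le_trans ?_ h
  exact Complex.abs_im_le_norm _

lemma my_aux_ne {c : ℝ} (hc0 : 0 ≤ c) (hc : c ≤ 1/2) {z : ℂ} (hz : ‖z‖ < 1) :
    (1 - (c:ℂ)*z^2) ≠ 0 := by
  intro h
  have := my_aux_re hc0 hc hz
  rw [h] at this
  norm_num at this

lemma my_aux_slit {c : ℝ} (hc0 : 0 ≤ c) (hc : c ≤ 1/2) {z : ℂ} (hz : ‖z‖ < 1) :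
    (1 - (c:ℂ)*z^2) ∈ Complex.slitPlane := by
  refine Complex.mem_slitPlane_iff.mpr (Or.inl ?_)
  have := my_aux_re hc0 hc hz
  linarith

lemma my_aux_arg {c : ℝ} (hc0 : 0 ≤ c) (hc : c ≤ 1/2) {z : ℂ} (hz : ‖z‖ < 1) :
    |Complex.arg (1 - (c:ℂ)*z^2)| ≤ 2 * c := by
  set w := (1 - (c:ℂ)*z^2) with hw
  have hre := my_aux_re hc0 hc hz
  have him := my_aux_im hc0 hz
  have hpos : 0 < w.re := by linarith
  have habs : |w.arg| < Real.pi/2 := Complex.abs_arg_lt_pi_div_two_iff.mpr (Or.inl hpos)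
  have harg : w.arg = Real.arctan (w.im / w.re) := by
    rw [← Complex.tan_arg]
    have h := abs_lt.mp habs
    exact (Real.arctan_tan (by linarith) (by linarith)).symm
  rw [harg]
  refine le_trans (my_abs_arctan_le_self _) ?_
  rw [abs_div, _root_.abs_of_pos hpos]
  calc |w.im| / w.re ≤ c / (1/2) :=
        div_le_div₀ hc0 him (by norm_num) hre
    _ = 2 * c := by ring

lemma my_aux_logim {c : ℝ} (hc0 : 0 ≤ c) (hc : c ≤ 1/2) {z : ℂ} (hz : ‖z‖ < 1)
    (r : ℝ) (hr : |r| * (2*c) < Real.pi) :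
    -Real.pi < (Complex.log (1 - (c:ℂ)*z^2) * (r:ℂ)).im ∧
      (Complex.log (1 - (c:ℂ)*z^2) * (r:ℂ)).im ≤ Real.pi := by
  have him : (Complex.log (1 - (c:ℂ)*z^2) * (r:ℂ)).im
      = Complex.arg (1 - (c:ℂ)*z^2) * r := by
    simp [Complex.mul_im, Complex.log_im]
  have harg := my_aux_arg hc0 hc hz
  have h1 : |Complex.arg (1 - (c:ℂ)*z^2) * r| ≤ |r| * (2*c) := by
    rw [abs_mul, mul_comm]
    exact mul_le_mul_of_nonneg_left harg (abs_nonneg r)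
  rw [him]
  have h2 := abs_lt.mp (lt_of_le_of_lt h1 hr)
  exact ⟨h2.1, h2.2.le⟩

lemma my_cpow_cpow {c r : ℝ} (hc0 : 0 ≤ c) (hc : c ≤ 1/2) {z : ℂ} (hz : ‖z‖ < 1)
    (hr : |r| * (2*c) < Real.pi) (u : ℂ) :
    ((1 - (c:ℂ)*z^2) ^ ((r:ℂ)))^u = (1 - (c:ℂ)*z^2) ^ ((r:ℂ) * u) := by
  obtain ⟨h1, h2⟩ := my_aux_logim hc0 hc hz r hr
  exact (Complex.cpow_mul u h1 h2).symm

lemma my_log_cpow {c r : ℝ} (hc0 : 0 ≤ c) (hc : c ≤ 1/2) {z : ℂ} (hz : ‖z‖ < 1)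
    (hr : |r| * (2*c) < Real.pi) :
    Complex.log ((1 - (c:ℂ)*z^2) ^ ((r:ℂ)))
      = Complex.log (1 - (c:ℂ)*z^2) * (r:ℂ) := by
  rw [Complex.cpow_def_of_ne_zero (my_aux_ne hc0 hc hz)]
  obtain ⟨h1, h2⟩ := my_aux_logim hc0 hc hz r hr
  exact Complex.log_exp h1 h2

lemma my_mul_cpow {s : ℝ} (hs : 0 < s) {z : ℂ} (hz : z ≠ 0) (b : ℂ) :
    ((s:ℂ)*z)^b = (s:ℂ)^b * z^b := by
  have hsne : (s:ℂ) ≠ 0 := by exact_mod_cast hs.ne'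
  rw [Complex.cpow_def_of_ne_zero (mul_ne_zero hsne hz),
      Complex.cpow_def_of_ne_zero hsne, Complex.cpow_def_of_ne_zero hz,
      Complex.log_ofReal_mul hs hz, add_mul, Complex.exp_add, Complex.ofReal_log hs.le]

lemma my_hasDerivAt (C e : ℂ) {z : ℂ} (hslit : (1 - C*z^2) ∈ Complex.slitPlane) :
    HasDerivAt (fun z : ℂ => z * (1 - C*z^2) ^ e)
      ((1 - C*z^2)^e + z * (e * (1 - C*z^2)^(e-1) * (-(C*(2*z))))) z := by
  have h1 : HasDerivAt (fun z : ℂ => 1 - C*z^2) (-(C*(2*z))) z := by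
    have h := ((hasDerivAt_pow 2 z).const_mul C).const_sub 1
    refine h.congr_deriv ?_
    push_cast; ring
  have h2 := h1.cpow_const (c := e) hslit
  have h3 := (hasDerivAt_id z).mul h2
  refine h3.congr_deriv ?_
  simp only [id_eq]; ring

/-- `segInt a ω z = ∫₀^z ω(t)/t^(a+1) dt`, the integral taken along the segment
from `0` to `z` (parametrised by `t = s·z`, `s ∈ [0,1]`), with principal powers. -/
noncomputable def segInt (a : ℝ) (ω : ℂ → ℂ) (z : ℂ) : ℂ :=
  z * ∫ s in (0:ℝ)..1, ω ((s:ℂ) * z) / (((s:ℂ) * z) ^ ((a:ℂ) + 1))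

theorem stmt_18 (a l : ℝ) (ha : a ∈ Ioo (0:ℝ) 1) (hl : 0 < l)
    (hls : l ≤ (1 - a) / Real.sqrt ((1 - a) ^ 2 + a ^ 2)) :
    (fun z : ℂ => z * (1 - ((a * l / (2 - a) : ℝ) : ℂ) * z ^ 2) ^ (-(1:ℂ) / (a:ℂ)))
      ∈ UClass a l ∧
    (∀ z ∈ ball (0:ℂ) 1, z ≠ 0 →
      (z / (z * (1 - ((a * l / (2 - a) : ℝ) : ℂ) * z ^ 2) ^ (-(1:ℂ) / (a:ℂ)))) ^ (a:ℂ) =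
        1 - (a:ℂ) * (l:ℂ) * z ^ (a:ℂ) * segInt a (fun t => t ^ 2) z) ∧
    ∀ γ : ℕ → ℂ,
      IsLogCoeff
        (fun z : ℂ => z * (1 - ((a * l / (2 - a) : ℝ) : ℂ) * z ^ 2) ^ (-(1:ℂ) / (a:ℂ))) γ →
      γ 2 = ((l / (2 * (2 - a)) : ℝ) : ℂ) := by
  obtain ⟨ha0, ha1⟩ := ha
  have h2a : (0:ℝ) < 2 - a := by linarith
  set c : ℝ := a * l / (2 - a) with hcdef
  have hsa : a ≤ Real.sqrt ((1-a)^2 + a^2) :=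
    le_trans (le_of_eq (Real.sqrt_sq ha0.le).symm) (Real.sqrt_le_sqrt (by nlinarith))
  have h1a : 1 - a ≤ Real.sqrt ((1-a)^2 + a^2) :=
    le_trans (le_of_eq (Real.sqrt_sq (by linarith : (0:ℝ) ≤ 1 - a)).symm)
      (Real.sqrt_le_sqrt (by nlinarith))
  have hsqpos : 0 < Real.sqrt ((1-a)^2 + a^2) := lt_of_lt_of_le ha0 hsa
  have hl1 : l ≤ 1 := hls.trans ((div_le_one hsqpos).mpr h1a)
  have hal : a * l ≤ 1 - a := by
    have h' : l * Real.sqrt ((1-a)^2 + a^2) ≤ 1 - a := (le_div_iff₀ hsqpos).mp hls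
    nlinarith
  have hc0 : 0 ≤ c := by positivity
  have hchalf : c ≤ 1/2 := by
    rw [hcdef, div_le_div_iff₀ h2a (by norm_num : (0:ℝ) < 2)]
    nlinarith
  have hb : ∀ r : ℝ, |r| ≤ a⁻¹ → |r| * (2*c) < Real.pi := by
    intro r hrb
    have hpi := Real.pi_gt_three
    have he1 : a⁻¹ * (2*c) = 2*l/(2-a) := by
      rw [hcdef]; field_simp
    have he2 : 2*l/(2-a) ≤ 2*l :=
      div_le_self (by linarith) (by linarith)
    have he3 : |r| * (2*c) ≤ a⁻¹ * (2*c) :=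
      mul_le_mul_of_nonneg_right hrb (by linarith)
    linarith
  have haC : (a:ℂ) ≠ 0 := by exact_mod_cast ha0.ne'
  have h2aC : (2:ℂ) - (a:ℂ) ≠ 0 := by
    have : ((2 - a : ℝ) : ℂ) ≠ 0 := by exact_mod_cast h2a.ne'
    push_cast at this; exact this
  have hEr : -(1:ℂ)/(a:ℂ) = ((-a⁻¹ : ℝ) : ℂ) := by push_cast; ring
  have hAr : ((a⁻¹ : ℝ) : ℂ) = ((a:ℂ))⁻¹ := by push_cast; ring
  have hbA : |a⁻¹| * (2*c) < Real.pi := hb a⁻¹ (le_of_eq (abs_of_pos (by positivity)))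
  have hbE : |(-a⁻¹ : ℝ)| * (2*c) < Real.pi := by rw [abs_neg]; exact hbA
  -- quotient z / f z
  have hquot : ∀ z : ℂ, ‖z‖ < 1 → z ≠ 0 →
      z / (z * (1 - (c:ℂ) * z^2) ^ (-(1:ℂ)/(a:ℂ))) = (1 - (c:ℂ) * z^2) ^ (((a⁻¹:ℝ):ℂ)) := by
    intro z hz hz0
    have hw0 : (1 - (c:ℂ) * z^2) ≠ 0 := my_aux_ne hc0 hchalf hz
    have hwne : (1 - (c:ℂ) * z^2) ^ (-(1:ℂ)/(a:ℂ)) ≠ 0 := by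
      rw [Complex.cpow_def_of_ne_zero hw0]; exact Complex.exp_ne_zero _
    have hune : (1 - (c:ℂ) * z^2) ^ (((a⁻¹:ℝ):ℂ)) ≠ 0 := by
      rw [Complex.cpow_def_of_ne_zero hw0]; exact Complex.exp_ne_zero _
    rw [hEr, show ((-a⁻¹ : ℝ) : ℂ) = -(((a⁻¹:ℝ):ℂ)) by push_cast; ring,
      Complex.cpow_neg]
    field_simp
  have hmem : ∀ z : ℂ, z ∈ ball (0:ℂ) 1 → ‖z‖ < 1 := by
    intro z hz; simpa [mem_ball, dist_zero_right] using hz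
  have hexp1 : ((a⁻¹:ℝ):ℂ) * (1 + (a:ℂ)) + (-(1:ℂ)/(a:ℂ)) = 1 := by
    rw [hAr]; field_simp; ring
  have hexp0 : ((a⁻¹:ℝ):ℂ) * (1 + (a:ℂ)) + ((-(1:ℂ)/(a:ℂ)) - 1) = 0 := by
    rw [hAr]; field_simp; ring
  refine ⟨⟨?_, ?_, ?_, ?_⟩, ?_, ?_⟩
  · -- analytic
    have hba : AnalyticOnNhd ℂ (fun z : ℂ => 1 - (c:ℂ) * z^2) (ball 0 1) := by
      apply AnalyticOnNhd.sub analyticOnNhd_const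
      exact analyticOnNhd_const.mul (analyticOnNhd_id.pow 2)
    exact analyticOnNhd_id.mul (hba.cpow analyticOnNhd_const
      (fun z hz => my_aux_slit hc0 hchalf (hmem z hz)))
  · simp
  · -- deriv at 0
    have hD := my_hasDerivAt ((c:ℝ):ℂ) (-(1:ℂ)/(a:ℂ)) (z := 0)
      (my_aux_slit hc0 hchalf (by simp))
    rw [hD.deriv]
    norm_num
  · -- the bound
    intro z hz hz0
    have hzn := hmem z hz
    have hw0 : (1 - (c:ℂ) * z^2) ≠ 0 := my_aux_ne hc0 hchalf hzn
    have hslit := my_aux_slit hc0 hchalf hzn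
    have hD := my_hasDerivAt ((c:ℝ):ℂ) (-(1:ℂ)/(a:ℂ)) hslit
    have expand :
        (1 - (c:ℂ)*z^2) ^ (((a⁻¹:ℝ):ℂ) * (1 + (a:ℂ))) *
          ((1 - (c:ℂ)*z^2) ^ (-(1:ℂ)/(a:ℂ)) + z * ((-(1:ℂ)/(a:ℂ)) *
            (1 - (c:ℂ)*z^2) ^ ((-(1:ℂ)/(a:ℂ)) - 1) * (-((c:ℂ) * (2*z)))))
        - 1 = (l:ℂ) * z^2 := by
      rw [mul_add, ← Complex.cpow_add _ _ hw0,
        show (1 - (c:ℂ)*z^2) ^ (((a⁻¹:ℝ):ℂ) * (1 + (a:ℂ))) *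
            (z * ((-(1:ℂ)/(a:ℂ)) * (1 - (c:ℂ)*z^2) ^ ((-(1:ℂ)/(a:ℂ)) - 1) * (-((c:ℂ) * (2*z)))))
          = ((1 - (c:ℂ)*z^2) ^ (((a⁻¹:ℝ):ℂ) * (1 + (a:ℂ))) *
              (1 - (c:ℂ)*z^2) ^ ((-(1:ℂ)/(a:ℂ)) - 1)) *
            (z * ((-(1:ℂ)/(a:ℂ)) * (-((c:ℂ) * (2*z))))) from by ring,
        ← Complex.cpow_add _ _ hw0, hexp1, hexp0, Complex.cpow_one, Complex.cpow_zero]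
      rw [hcdef]
      push_cast
      field_simp
      ring
    calc ‖(z / (z * (1 - (c:ℂ) * z^2) ^ (-(1:ℂ)/(a:ℂ)))) ^ ((1:ℂ) + (a:ℂ)) *
          deriv (fun z : ℂ => z * (1 - (c:ℂ) * z ^ 2) ^ (-(1:ℂ) / (a:ℂ))) z - 1‖
        = ‖(l:ℂ) * z^2‖ := by
          rw [hD.deriv, hquot z hzn hz0,
            my_cpow_cpow hc0 hchalf hzn hbA ((1:ℂ) + (a:ℂ)), expand]
      _ = l * ‖z‖^2 := by
          rw [norm_mul, norm_pow, Complex.norm_real, Real.norm_eq_abs,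
            _root_.abs_of_pos hl]
      _ < l := by
          have h2 : ‖z‖^2 < 1 := by nlinarith [norm_nonneg z]
          nlinarith
  · -- part 2
    intro z hz hz0
    have hzn := hmem z hz
    have hw0 : (1 - (c:ℂ) * z^2) ≠ 0 := my_aux_ne hc0 hchalf hzn
    have hintegrand : ∀ s : ℝ, s ∈ Set.Ioc (0:ℝ) 1 →
        ((s:ℂ) * z)^2 / (((s:ℂ) * z) ^ ((a:ℂ) + 1))
          = ((s ^ (1-a) : ℝ) : ℂ) * z ^ (((1-a : ℝ)):ℂ) := by
      intro s hs
      have hs0 : (0:ℝ) < s := hs.1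
      have hu0 : (s:ℂ) * z ≠ 0 :=
        mul_ne_zero (by exact_mod_cast hs0.ne') hz0
      rw [show ((s:ℂ)*z)^2 = ((s:ℂ)*z) ^ ((2:ℕ):ℂ) from (Complex.cpow_natCast _ 2).symm,
        ← Complex.cpow_sub _ _ hu0,
        show ((2:ℕ):ℂ) - ((a:ℂ)+1) = (((1-a:ℝ)):ℂ) from by push_cast; ring,
        my_mul_cpow hs0 hz0, ← Complex.ofReal_cpow hs0.le]
    have hseg : segInt a (fun t => t^2) z
        = z * (((1/(2-a) : ℝ):ℂ) * z ^ (((1-a : ℝ)):ℂ)) := by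
      rw [segInt]
      congr 1
      rw [intervalIntegral.integral_congr_ae
        (Filter.Eventually.of_forall (fun s hs => hintegrand s
          (by simpa [Set.uIoc_of_le (by norm_num : (0:ℝ) ≤ 1)] using hs)))]
      rw [intervalIntegral.integral_mul_const, intervalIntegral.integral_ofReal,
        integral_rpow (Or.inl (by linarith : (-1:ℝ) < 1 - a))]
      have hre : ((1:ℝ) ^ (1 - a + 1) - 0 ^ (1 - a + 1)) / (1 - a + 1) = 1/(2-a) := by
        rw [Real.one_rpow, Real.zero_rpow (by linarith : (1:ℝ)-a+1 ≠ 0),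
          div_eq_div_iff (by linarith) (by linarith)]
        ring
      rw [hre]
    have hz1 : z ^ ((a:ℂ)) * z ^ (((1-a:ℝ)):ℂ) = z := by
      rw [← Complex.cpow_add _ _ hz0,
        show (a:ℂ) + ((1-a:ℝ):ℂ) = 1 from by push_cast; ring, Complex.cpow_one]
    have hAa : ((a⁻¹:ℝ):ℂ) * (a:ℂ) = 1 := by rw [hAr]; field_simp
    rw [hquot z hzn hz0, my_cpow_cpow hc0 hchalf hzn hbA ((a:ℂ)), hAa,
      Complex.cpow_one, hseg,
      show (a:ℂ)*(l:ℂ)*z^((a:ℂ))*(z*(((1/(2-a):ℝ):ℂ) * z^(((1-a:ℝ)):ℂ)))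
        = ((a:ℂ)*(l:ℂ)*((1/(2-a):ℝ):ℂ)) * ((z^((a:ℂ)) * z^(((1-a:ℝ)):ℂ)) * z) from by ring,
      hz1, hcdef]
    push_cast
    field_simp
  · -- part 3
    intro γ hγ
    set F : ℂ → ℂ := fun y => (-Complex.log (1 - (c:ℂ) * y^2)) * ((a⁻¹:ℝ):ℂ) with hFdef
    have hFlog : ∀ y : ℂ, ‖y‖ < 1 → y ≠ 0 →
        Complex.log ((y * (1 - (c:ℂ) * y^2) ^ (-(1:ℂ)/(a:ℂ))) / y) = F y := by
      intro y hy hy0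
      rw [mul_comm y, mul_div_assoc, div_self hy0, mul_one, hEr,
        my_log_cpow hc0 hchalf hy hbE, hFdef]
      push_cast
      ring
    set δ : ℕ → ℂ := fun n => if n = 0 then 0 else 2 * γ n with hδdef
    set ε : ℕ → ℂ := fun n =>
      if n % 2 = 0 then ((c:ℝ):ℂ)^(n/2) / ((a:ℂ) * ((n/2 : ℕ) : ℂ)) else 0 with hεdef
    have hδsum : ∀ y : ℂ, ‖y‖ < 1 → HasSum (fun n => δ n * y^n) (F y) := by
      intro y hy
      rcases eq_or_ne y 0 with rfl | hy0
      · have hF0 : F 0 = 0 := by simp [hFdef]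
        rw [hF0]
        have hzero : (fun n => δ n * (0:ℂ)^n) = fun _ => (0:ℂ) := by
          funext n
          rcases Nat.eq_zero_or_pos n with rfl | hn
          · simp [hδdef]
          · simp [zero_pow hn.ne']
        rw [hzero]
        exact hasSum_zero
      · have h1 := hγ y (by simpa [mem_ball, dist_zero_right] using hy) hy0
        rw [hFlog y hy hy0] at h1
        refine (Function.Injective.hasSum_iff (f := fun n => δ n * y^n)
          Nat.succ_injective ?_).mp ?_
        · intro x hx
          have hx0 : x = 0 := by
            rcases x with _ | x
            · rfl
            · exact absurd ⟨x, rfl⟩ hx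
          simp [hx0, hδdef]
        · have hfun : ((fun n => δ n * y^n) ∘ Nat.succ)
              = (fun n : ℕ => 2 * γ (n+1) * y^(n+1)) := by
            funext n
            simp only [Function.comp_apply, hδdef, Nat.succ_eq_add_one]
            rw [if_neg (Nat.succ_ne_zero n)]
          rw [hfun]
          exact h1
    have hεsum : ∀ y : ℂ, ‖y‖ < 1 → HasSum (fun n => ε n * y^n) (F y) := by
      intro y hy
      have hcy : ‖(c:ℂ) * y^2‖ < 1 :=
        lt_of_le_of_lt (my_aux_norm hc0 hy) (by linarith)
      have h1 := (hasSum_taylorSeries_neg_log hcy).mul_right (((a⁻¹:ℝ):ℂ))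
      have hinj : Function.Injective (fun k : ℕ => 2 * k) := fun x y h => by
        simp only [] at h; omega
      refine (Function.Injective.hasSum_iff (f := fun n => ε n * y^n) hinj ?_).mp ?_
      · intro x hx
        have hodd : ¬ (x % 2 = 0) := by
          intro h
          exact hx ⟨x / 2, by show 2 * (x/2) = x; omega⟩
        simp [hεdef, hodd]
      · have hfun : ((fun n => ε n * y^n) ∘ (fun k => 2*k))
            = (fun k : ℕ => ((c:ℂ)*y^2)^k / k * ((a⁻¹:ℝ):ℂ)) := by
          funext k
          simp only [Function.comp_apply, hεdef]
          rw [if_pos (by omega : 2 * k % 2 = 0),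
            show (2*k)/2 = k from by omega, mul_pow, pow_mul,
            div_eq_mul_inv, div_eq_mul_inv, mul_inv, hAr]
          ring
        rw [hfun]
        exact h1
    have hball : ∀ d : ℕ → ℂ, (∀ y : ℂ, ‖y‖ < 1 → HasSum (fun n => d n * y^n) (F y)) →
        HasFPowerSeriesAt F (FormalMultilinearSeries.ofScalars ℂ d) 0 := by
      intro d hd
      refine HasFPowerSeriesOnBall.hasFPowerSeriesAt (r := ((1/2 : NNReal) : ENNReal)) ?_
      refine ⟨?_, by norm_num, ?_⟩
      · apply FormalMultilinearSeries.le_radius_of_summable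
        have h1 : Summable (fun n => d n * ((2⁻¹ : ℂ))^n) :=
          (hd 2⁻¹ (by norm_num)).summable
        have h2 : Summable (fun n => ‖d n * ((2⁻¹ : ℂ))^n‖) := summable_norm_iff.mpr h1
        refine h2.congr ?_
        intro n
        rw [norm_mul, norm_pow, FormalMultilinearSeries.ofScalars_norm]
        norm_num
      · intro y hy
        rw [Metric.emetric_ball_nnreal] at hy
        have hy' : ‖y‖ < 1 := by
          have := mem_ball_zero_iff.mp hy
          have hco : ((1/2 : NNReal) : ℝ) = 1/2 := by norm_num
          rw [hco] at this
          linarith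
        rw [zero_add]
        have h3 := hd y hy'
        simp only [FormalMultilinearSeries.ofScalars_apply_eq, smul_eq_mul]
        exact h3
    have hpq := (hball δ hδsum).eq_formalMultilinearSeries (hball ε hεsum)
    have hde : δ = ε := FormalMultilinearSeries.ofScalars_series_injective ℂ ℂ hpq
    have h2γ : δ 2 = ε 2 := by rw [hde]
    rw [hδdef, hεdef] at h2γ
    norm_num at h2γ
    rw [hcdef] at h2γ
    push_cast at h2γ ⊢
    field_simp at h2γ
    have h3 : 2 * γ 2 * ((2:ℂ) - (a:ℂ)) = (l:ℂ) := by
      apply mul_right_cancel₀ haC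
      linear_combination (a:ℂ) * h2γ
    rw [eq_div_iff (mul_ne_zero two_ne_zero h2aC)]
    linear_combination h3
end

section
/- Let 0<α<1 and 0<λ≤λ⋆=(1−α)/√((1−α)²+α²). The function f₃(z) = z(1 − (αλ/(3−α))z³)^{−1/α} (principal branch), which corresponds to the Schwarz function ω(z)=z³ in the representation (z/f(z))^α = 1 − αλ z^α ∫₀^z ω(t)/t^{α+1} dt, belongs to U(α,λ) and its third logarithmic coefficient equals γ₃ = λ/(2(3−α)). In particular, the bound |γ₃| ≤ λ/(2(3−α)) of the main theorem is attained, hence sharp. -/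
open Complex Metric Set
open scoped NNReal ENNReal

/-! ### Auxiliary lemmas -/

theorem wfacts (C : ℝ) (hC0 : 0 ≤ C) (hC : C ≤ 1/2) (z : ℂ) (hz : ‖z‖ ≤ 1) :
    0 < (1 - (C:ℂ) * z ^ 3).re ∧ (1 - (C:ℂ) * z ^ 3) ≠ 0 ∧
      |(Complex.log (1 - (C:ℂ) * z ^ 3)).im| ≤ 3/2 * C := by
  have hn : ‖(C:ℂ) * z ^ 3‖ ≤ C := by
    rw [norm_mul, norm_pow, Complex.norm_real, Real.norm_of_nonneg hC0]
    nlinarith [norm_nonneg z, pow_le_one₀ (norm_nonneg z) hz (n := 3)]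
  have hre : 0 < (1 - (C:ℂ) * z ^ 3).re := by
    have := Complex.abs_re_le_norm ((C:ℂ) * z ^ 3)
    simp only [Complex.sub_re, Complex.one_re]
    have := abs_le.1 (this.trans hn)
    linarith
  refine ⟨hre, fun h => by simp [h] at hre, ?_⟩
  have h1 : (1 : ℂ) - (C:ℂ) * z ^ 3 = 1 + (-((C:ℂ) * z ^ 3)) := by ring
  have h2 := Complex.abs_im_le_norm (Complex.log (1 - (C:ℂ) * z ^ 3))
  calc |(Complex.log (1 - (C:ℂ) * z ^ 3)).im| ≤ ‖Complex.log (1 - (C:ℂ) * z ^ 3)‖ := h2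
    _ = ‖Complex.log (1 + (-((C:ℂ) * z ^ 3)))‖ := by rw [← h1]
    _ ≤ 3/2 * ‖-((C:ℂ) * z ^ 3)‖ := Complex.norm_log_one_add_half_le_self (by rw [norm_neg]; linarith)
    _ ≤ 3/2 * C := by rw [norm_neg]; linarith

theorem scal (a l : ℝ) (ha : a ∈ Ioo (0:ℝ) 1) (hl : 0 < l)
    (hls : l ≤ (1 - a) / Real.sqrt ((1 - a) ^ 2 + a ^ 2)) :
    l ≤ 1 ∧ 0 < a * l / (3 - a) ∧ a * l / (3 - a) ≤ 1/2 ∧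
      3/2 * (a * l / (3 - a)) ≤ 3/4 * a := by
  obtain ⟨ha0, ha1⟩ := ha
  have h3a : 0 < 3 - a := by linarith
  have hspos : 0 < Real.sqrt ((1 - a) ^ 2 + a ^ 2) := by positivity
  have hs : 1 - a ≤ Real.sqrt ((1 - a) ^ 2 + a ^ 2) := by
    nlinarith [Real.sq_sqrt (by positivity : (0:ℝ) ≤ (1-a)^2 + a^2),
      Real.sqrt_nonneg ((1-a)^2 + a^2)]
  have hl1 : l ≤ 1 := hls.trans ((div_le_one hspos).2 hs)
  have hC0 : 0 < a * l / (3 - a) := by positivity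
  have hCa : a * l / (3 - a) ≤ a / 2 := by
    rw [div_le_div_iff₀ h3a (by norm_num)]
    nlinarith
  exact ⟨hl1, hC0, by linarith, by linarith⟩

theorem cpow_pow_comm (a : ℝ) (ha0 : 0 < a) (w : ℂ)
    (harg : |(Complex.log w).im| ≤ 3/4 * a) (t : ℂ) :
    (w ^ ((a:ℂ)⁻¹)) ^ t = w ^ ((a:ℂ)⁻¹ * t) := by
  have hpi : (3:ℝ)/4 * a * a⁻¹ < Real.pi := by
    rw [mul_assoc, mul_inv_cancel₀ ha0.ne', mul_one]
    linarith [Real.pi_gt_three]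
  have him : (Complex.log w * (a:ℂ)⁻¹).im = (Complex.log w).im * a⁻¹ := by
    rw [← Complex.ofReal_inv]
    simp [Complex.mul_im]
  have hb : |(Complex.log w * (a:ℂ)⁻¹).im| < Real.pi := by
    rw [him, abs_mul, _root_.abs_of_nonneg (by positivity : (0:ℝ) ≤ a⁻¹)]
    calc |(Complex.log w).im| * a⁻¹ ≤ 3/4 * a * a⁻¹ := by
          apply mul_le_mul_of_nonneg_right harg (by positivity)
      _ < Real.pi := hpi
  obtain ⟨h1, h2⟩ := abs_lt.1 hb
  exact (Complex.cpow_mul t h1 h2.le).symm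

theorem log_cpow' (a : ℝ) (ha0 : 0 < a) (w : ℂ) (hw : w ≠ 0)
    (harg : |(Complex.log w).im| ≤ 3/4 * a) :
    Complex.log (w ^ (-(1:ℂ)/(a:ℂ))) = (-(1:ℂ)/(a:ℂ)) * Complex.log w := by
  have hpi : (3:ℝ)/4 * a * a⁻¹ < Real.pi := by
    rw [mul_assoc, mul_inv_cancel₀ ha0.ne', mul_one]
    linarith [Real.pi_gt_three]
  have heq : (-(1:ℂ)/(a:ℂ)) = ((-(1:ℝ)/a : ℝ) : ℂ) := by push_cast; ring
  have him : ((-(1:ℂ)/(a:ℂ)) * Complex.log w).im = (-(1:ℝ)/a) * (Complex.log w).im := by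
    rw [heq]; simp [Complex.mul_im]
  have hb : |((-(1:ℂ)/(a:ℂ)) * Complex.log w).im| < Real.pi := by
    rw [him, abs_mul]
    have : |(-(1:ℝ)/a)| = a⁻¹ := by
      rw [abs_div, abs_neg, abs_one, _root_.abs_of_nonneg ha0.le, one_div]
    rw [this]
    calc a⁻¹ * |(Complex.log w).im| ≤ a⁻¹ * (3/4 * a) := by
          apply mul_le_mul_of_nonneg_left harg (by positivity)
      _ = 3/4 * a * a⁻¹ := by ring
      _ < Real.pi := hpi
  obtain ⟨h1, h2⟩ := abs_lt.1 hb
  rw [Complex.cpow_def_of_ne_zero hw, ← Complex.log_exp (x := (-(1:ℂ)/(a:ℂ)) * Complex.log w) h1 h2.le]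
  ring_nf

theorem derivf (C : ℝ) (m : ℂ) (z : ℂ) (hre : 0 < (1 - (C:ℂ)*z^3).re) :
    HasDerivAt (fun z : ℂ => z * (1 - (C:ℂ)*z^3)^m)
      ((1-(C:ℂ)*z^3)^m + z * (m * (1-(C:ℂ)*z^3)^(m-1) * (-((C:ℂ) * (3*z^2))))) z := by
  have h1 : HasDerivAt (fun z : ℂ => 1 - (C:ℂ)*z^3) (-((C:ℂ) * (3*z^2))) z := by
    have := ((hasDerivAt_pow 3 z).const_mul (C:ℂ)).const_sub 1
    norm_num at this
    convert this using 1
  have h2 := h1.cpow_const (c := m) (Or.inl hre)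
  have h3 := (hasDerivAt_id z).mul h2
  exact h3.congr_deriv (by simp only [id_eq, one_mul])

theorem stmt_19 (a l : ℝ) (ha : a ∈ Ioo (0:ℝ) 1) (hl : 0 < l)
    (hls : l ≤ (1 - a) / Real.sqrt ((1 - a) ^ 2 + a ^ 2)) :
    (fun z : ℂ => z * (1 - ((a * l / (3 - a) : ℝ) : ℂ) * z ^ 3) ^ (-(1:ℂ) / (a:ℂ)))
      ∈ UClass a l ∧
    (∀ z ∈ ball (0:ℂ) 1, z ≠ 0 →
      (z / (z * (1 - ((a * l / (3 - a) : ℝ) : ℂ) * z ^ 3) ^ (-(1:ℂ) / (a:ℂ)))) ^ (a:ℂ) =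
        1 - (a:ℂ) * (l:ℂ) * z ^ (a:ℂ) * segInt a (fun t => t ^ 3) z) ∧
    ∀ γ : ℕ → ℂ,
      IsLogCoeff
        (fun z : ℂ => z * (1 - ((a * l / (3 - a) : ℝ) : ℂ) * z ^ 3) ^ (-(1:ℂ) / (a:ℂ))) γ →
      γ 3 = ((l / (2 * (3 - a)) : ℝ) : ℂ) := by
  obtain ⟨hl1, hC0, hC2, hC34⟩ := scal a l ha hl hls
  obtain ⟨ha0, ha1⟩ := ha
  set C : ℝ := a * l / (3 - a) with hCdef
  set m : ℂ := -(1:ℂ) / (a:ℂ) with hmdef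
  have h3a : (0:ℝ) < 3 - a := by linarith
  have h3aC : ((3 - a : ℝ) : ℂ) ≠ 0 := ofReal_ne_zero.2 h3a.ne'
  have haC : (a:ℂ) ≠ 0 := ofReal_ne_zero.2 ha0.ne'
  set f : ℂ → ℂ := fun z : ℂ => z * (1 - (C:ℂ) * z ^ 3) ^ m with hfdef
  -- facts about w z = 1 - C z^3
  have hw := fun (z : ℂ) (hz : ‖z‖ ≤ 1) => wfacts C hC0.le hC2 z hz
  have harg : ∀ z : ℂ, ‖z‖ ≤ 1 → |(Complex.log (1 - (C:ℂ) * z ^ 3)).im| ≤ 3/4 * a :=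
    fun z hz => (hw z hz).2.2.trans (by linarith)
  -- z / f z
  have hcne : ∀ z : ℂ, ‖z‖ ≤ 1 → (1 - (C:ℂ) * z ^ 3) ^ ((a:ℂ)⁻¹) ≠ 0 := by
    intro z hz
    simp only [ne_eq, Complex.cpow_eq_zero_iff, not_and_or, not_not]
    exact Or.inl (hw z hz).2.1
  have hzf : ∀ z : ℂ, z ≠ 0 → ‖z‖ ≤ 1 →
      z / f z = (1 - (C:ℂ) * z ^ 3) ^ ((a:ℂ)⁻¹) := by
    intro z hz0 hz
    have hm' : m = -((a:ℂ)⁻¹) := by rw [hmdef]; field_simp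
    rw [hfdef]
    simp only
    rw [hm', Complex.cpow_neg]
    field_simp
  -- the fundamental identity (part 1 core)
  have keyid : ∀ z : ℂ, z ≠ 0 → ‖z‖ ≤ 1 →
      (z / f z) ^ ((1:ℂ) + (a:ℂ)) * deriv f z - 1 = (l:ℂ) * z ^ 3 := by
    intro z hz0 hz
    obtain ⟨hre, hwne, -⟩ := hw z hz
    rw [hzf z hz0 hz, cpow_pow_comm a ha0 _ (harg z hz) _, (derivf C m z hre).deriv]
    have ew : (a:ℂ)⁻¹ * (1 + (a:ℂ)) = (1:ℂ) - m := by
      rw [hmdef]; field_simp; ring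
    rw [ew]
    set w : ℂ := 1 - (C:ℂ) * z ^ 3 with hwdef
    have c1 : w ^ ((1:ℂ) - m) * w ^ m = w := by
      rw [← Complex.cpow_add _ _ hwne]; simp
    have c2 : w ^ ((1:ℂ) - m) * w ^ (m - 1) = 1 := by
      rw [← Complex.cpow_add _ _ hwne]
      have : (1:ℂ) - m + (m - 1) = 0 := by ring
      rw [this, Complex.cpow_zero]
    have er : ((C:ℝ):ℂ) * ((3:ℂ) - (a:ℂ)) = (l:ℂ) * (a:ℂ) := by
      have : (C:ℝ) * (3 - a) = l * a := by
        rw [hCdef]; field_simp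
      calc ((C:ℝ):ℂ) * ((3:ℂ) - (a:ℂ)) = (((C * (3 - a) : ℝ)):ℂ) := by push_cast; ring
        _ = (((l * a : ℝ)):ℂ) := by rw [this]
        _ = (l:ℂ) * (a:ℂ) := by push_cast; ring
    calc w ^ ((1:ℂ) - m) * (w ^ m + z * (m * w ^ (m - 1) * (-((C:ℂ) * (3 * z ^ 2))))) - 1
        = (w ^ ((1:ℂ) - m) * w ^ m) + (w ^ ((1:ℂ) - m) * w ^ (m - 1)) * (z * m * (-((C:ℂ) * (3 * z ^ 2)))) - 1 := by
          ring
      _ = w + (z * m * (-((C:ℂ) * (3 * z ^ 2)))) - 1 := by rw [c1, c2, one_mul]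
      _ = (-(C:ℂ) - 3 * (C:ℂ) * m) * z ^ 3 := by rw [hwdef]; ring
      _ = (l:ℂ) * z ^ 3 := by
          congr 1
          rw [hmdef]
          field_simp
          linear_combination er
  
  -- Part 1: membership
  have hmem : f ∈ UClass a l := by
    simp only [UClass, mem_setOf_eq]
    refine ⟨?_, ?_, ?_, ?_⟩
    · have hb : AnalyticOnNhd ℂ (fun z : ℂ => 1 - (C:ℂ) * z ^ 3) (ball 0 1) := by
        intro z hz
        exact analyticAt_const.sub (analyticAt_const.mul (analyticAt_id.pow 3))
      have hc : AnalyticOnNhd ℂ (fun z : ℂ => (1 - (C:ℂ) * z ^ 3) ^ m) (ball 0 1) := by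
        refine hb.cpow analyticOnNhd_const ?_
        intro z hz
        exact Or.inl (hw z (le_of_lt (mem_ball_zero_iff.1 hz))).1
      exact analyticOnNhd_id.mul hc
    · simp [hfdef]
    · have hre0 : 0 < ((1:ℂ) - (C:ℂ) * (0:ℂ) ^ 3).re := by norm_num
      have h0 := (derivf C m 0 hre0).deriv
      rw [hfdef, h0]
      norm_num
    · intro z hz hz0
      rw [keyid z hz0 (le_of_lt (mem_ball_zero_iff.1 hz))]
      rw [norm_mul, Complex.norm_real, Real.norm_of_nonneg hl.le, norm_pow]
      have hzlt : ‖z‖ < 1 := mem_ball_zero_iff.1 hz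
      nlinarith [norm_nonneg z, pow_lt_one₀ (norm_nonneg z) hzlt (by norm_num : 3 ≠ 0)]
  -- Part 2
  have hpart2 : ∀ z ∈ ball (0:ℂ) 1, z ≠ 0 → (z / f z) ^ (a:ℂ) =
      1 - (a:ℂ) * (l:ℂ) * z ^ (a:ℂ) * segInt a (fun t => t ^ 3) z := by
    intro z hz hz0
    have hz1 : ‖z‖ ≤ 1 := le_of_lt (mem_ball_zero_iff.1 hz)
    obtain ⟨hre, hwne, -⟩ := hw z hz1
    have hL : (z / f z) ^ (a:ℂ) = 1 - (C:ℂ) * z ^ 3 := by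
      rw [hzf z hz0 hz1, cpow_pow_comm a ha0 _ (harg z hz1) _, inv_mul_cancel₀ haC,
        Complex.cpow_one]
    rw [hL]
    have hintg : ∀ s ∈ uIcc (0:ℝ) 1,
        (fun t : ℂ => t ^ 3) ((s:ℂ) * z) / (((s:ℂ) * z) ^ ((a:ℂ) + 1))
        = ((s ^ (2-a) : ℝ) : ℂ) * z ^ (((2-a : ℝ)) : ℂ) := by
      intro s hs
      rw [Set.uIcc_of_le (by norm_num : (0:ℝ) ≤ 1)] at hs
      rcases eq_or_lt_of_le hs.1 with h0 | hpos
      · simp only [← h0]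
        rw [Real.zero_rpow (by linarith : (2:ℝ) - a ≠ 0)]
        simp
      · have hsC : ((s:ℝ):ℂ) ≠ 0 := ofReal_ne_zero.2 hpos.ne'
        have hsz : (s:ℂ) * z ≠ 0 := mul_ne_zero hsC hz0
        simp only
        rw [show (((s:ℂ) * z) ^ (3:ℕ) : ℂ) = ((s:ℂ) * z) ^ ((3:ℕ):ℂ) from
          (Complex.cpow_natCast _ 3).symm, ← Complex.cpow_sub _ _ hsz,
          show ((3:ℕ):ℂ) - ((a:ℂ) + 1) = (((2-a : ℝ)):ℂ) by push_cast; ring]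
        rw [Complex.cpow_def_of_ne_zero hsz, Complex.log_ofReal_mul hpos hz0, add_mul,
          Complex.exp_add, ← Complex.cpow_def_of_ne_zero hz0,
          show Complex.exp ((Real.log s : ℂ) * (((2-a : ℝ)):ℂ))
              = ((s:ℂ)) ^ ((((2-a : ℝ))):ℂ) by
            rw [Complex.cpow_def_of_ne_zero hsC, Complex.ofReal_log hpos.le],
          ← Complex.ofReal_cpow hpos.le]
    have hseg : segInt a (fun t => t ^ 3) z
        = z * ((((1 - 0)/(2 - a + 1) : ℝ)):ℂ) * z ^ (((2-a : ℝ)) : ℂ) := by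
      rw [segInt, intervalIntegral.integral_congr hintg,
        intervalIntegral.integral_mul_const, intervalIntegral.integral_ofReal,
        integral_rpow (Or.inl (by linarith : (-1:ℝ) < 2 - a)),
        Real.one_rpow, Real.zero_rpow (by linarith : (2:ℝ) - a + 1 ≠ 0)]
      ring
    rw [hseg]
    have e2 : z ^ ((a:ℂ)) * z ^ (((2-a : ℝ)) : ℂ) = z ^ (2:ℕ) := by
      rw [← Complex.cpow_add _ _ hz0,
        show (a:ℂ) + (((2-a : ℝ)):ℂ) = ((2:ℕ):ℂ) by push_cast; ring,
        Complex.cpow_natCast]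
    have e4 : (a:ℂ) * (l:ℂ) * ((((1 - 0)/(2 - a + 1) : ℝ)):ℂ) = ((C:ℝ):ℂ) := by
      have n1 : (2:ℂ) - (a:ℂ) + 1 ≠ 0 := by
        have h' : ((2 - a + 1 : ℝ) : ℂ) ≠ 0 := ofReal_ne_zero.2 (by linarith)
        intro h; apply h'; push_cast; linear_combination h
      have n2 : (3:ℂ) - (a:ℂ) ≠ 0 := by
        have h' : ((3 - a : ℝ) : ℂ) ≠ 0 := ofReal_ne_zero.2 h3a.ne'
        intro h; apply h'; push_cast; linear_combination h
      rw [hCdef]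
      push_cast
      field_simp
      ring
    have hS : (a:ℂ) * (l:ℂ) * z ^ ((a:ℂ)) * (z * ((((1 - 0)/(2 - a + 1) : ℝ)):ℂ) * z ^ (((2-a : ℝ)) : ℂ))
        = ((C:ℝ):ℂ) * z ^ 3 := by
      calc (a:ℂ) * (l:ℂ) * z ^ ((a:ℂ)) * (z * ((((1 - 0)/(2 - a + 1) : ℝ)):ℂ) * z ^ (((2-a : ℝ)) : ℂ))
          = ((a:ℂ) * (l:ℂ) * ((((1 - 0)/(2 - a + 1) : ℝ)):ℂ)) * (z ^ ((a:ℂ)) * z ^ (((2-a : ℝ)) : ℂ)) * z := by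
            ring
        _ = ((C:ℝ):ℂ) * z ^ (2:ℕ) * z := by rw [e2, e4]
        _ = ((C:ℝ):ℂ) * z ^ 3 := by ring
    linear_combination hS
  refine ⟨hmem, hpart2, ?_⟩
  intro γ hγ
  classical
  set h : ℂ → ℂ := fun z => Complex.log (f z / z) with hhdef
  have hlogf : ∀ z : ℂ, z ≠ 0 → ‖z‖ ≤ 1 → h z = m * Complex.log (1 - (C:ℂ) * z ^ 3) := by
    intro z hz0 hz1
    have hfz : f z / z = (1 - (C:ℂ) * z ^ 3) ^ m := by
      rw [hfdef]; simp only; rw [mul_comm, mul_div_assoc, div_self hz0, mul_one]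
    rw [hhdef]; simp only [hfz]
    exact log_cpow' a ha0 _ (hw z hz1).2.1 (harg z hz1)
  have h0 : h 0 = 0 := by rw [hhdef]; simp [hfdef]
  set e : ℕ → ℂ := fun n => if n = 0 then 0 else 2 * γ n with hedef
  set d : ℕ → ℂ :=
    fun n => if 3 ∣ n then ((a:ℂ))⁻¹ * ((C:ℝ):ℂ) ^ (n/3) / ((n/3 : ℕ) : ℂ) else 0 with hddef
  have hesum : ∀ z : ℂ, ‖z‖ < 1 → HasSum (fun n => e n * z ^ n) (h z) := by
    intro z hz
    by_cases hz0 : z = 0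
    · subst hz0
      rw [h0]
      have he0 : (fun n : ℕ => e n * (0:ℂ) ^ n) = fun _ => 0 := by
        funext n
        cases n with
        | zero => simp [hedef]
        | succ k => simp
      rw [he0]
      exact hasSum_zero
    · have h1 := hγ z (mem_ball_zero_iff.2 hz) hz0
      have h2 : (fun n : ℕ => e (n+1) * z ^ (n+1)) = fun n : ℕ => 2 * γ (n+1) * z ^ (n+1) := by
        funext n; simp [hedef, mul_assoc]
      rw [← h2] at h1
      have h3 := (hasSum_nat_add_iff (f := fun n : ℕ => e n * z ^ n) 1).1 h1
      simpa [hedef] using h3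
  have hdsum : ∀ z : ℂ, ‖z‖ < 1 → HasSum (fun n => d n * z ^ n) (h z) := by
    intro z hz
    by_cases hz0 : z = 0
    · subst hz0; rw [h0]
      have hd0 : (fun n : ℕ => d n * (0:ℂ) ^ n) = fun _ => 0 := by
        funext n
        cases n with
        | zero => simp [hddef]
        | succ k => simp
      rw [hd0]; exact hasSum_zero
    · have hu : ‖(C:ℂ) * z ^ 3‖ < 1 := by
        rw [norm_mul, Complex.norm_real, Real.norm_of_nonneg hC0.le, norm_pow]
        nlinarith [norm_nonneg z, pow_le_one₀ (norm_nonneg z) hz.le (n := 3)]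
      have hts := (Complex.hasSum_taylorSeries_neg_log hu).mul_left (-m)
      have hval : -m * -Complex.log (1 - (C:ℂ) * z ^ 3) = h z := by
        rw [hlogf z hz0 hz.le]; ring
      rw [hval] at hts
      have hinj : Function.Injective (fun n : ℕ => 3 * n) := fun x y hxy => by simp only at hxy; omega
      have hcomp : (fun n : ℕ => d n * z ^ n) ∘ (fun n : ℕ => 3 * n)
          = fun n : ℕ => -m * (((C:ℂ) * z ^ 3) ^ n / n) := by
        funext n
        simp only [Function.comp_apply]
        have hdvd : 3 ∣ 3 * n := Dvd.intro n rfl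
        have hq : (3 * n) / 3 = n := by omega
        rw [hddef]
        simp only [hdvd, if_true, hq]
        have hm' : -m = ((a:ℂ))⁻¹ := by rw [hmdef]; field_simp
        rw [hm', mul_pow, pow_mul]
        ring
      have h5 : HasSum ((fun n : ℕ => d n * z ^ n) ∘ (fun n : ℕ => 3 * n)) (h z) := by
        rw [hcomp]; exact hts
      refine (Function.Injective.hasSum_iff hinj ?_).1 h5
      intro x hx
      have hnd : ¬ 3 ∣ x := by
        rintro ⟨k, hk⟩
        exact hx ⟨k, by simp only; omega⟩
      rw [hddef]; simp [hnd]
  have hrad : ∀ (c : ℕ → ℂ), (∀ z : ℂ, ‖z‖ < 1 → HasSum (fun n => c n * z ^ n) (h z)) →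
      ((1/2 : ℝ≥0) : ℝ≥0∞) ≤ (FormalMultilinearSeries.ofScalars ℂ c).radius := by
    intro c hc
    apply FormalMultilinearSeries.le_radius_of_isBigO
    have hsum := (hc (((1/2 : ℝ)) : ℂ) (by rw [Complex.norm_real]; norm_num)).summable
    have htend := hsum.tendsto_atTop_zero
    have h6 : Filter.Tendsto (fun n => ‖c n * (((1/2 : ℝ)) : ℂ) ^ n‖) Filter.atTop (nhds 0) := by
      rw [show (0:ℝ) = ‖(0:ℂ)‖ by simp]
      exact htend.norm
    have h7 : (fun n => ‖(FormalMultilinearSeries.ofScalars ℂ c) n‖ * ((1/2 : ℝ≥0) : ℝ) ^ n)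
        = fun n => ‖c n * (((1/2 : ℝ)) : ℂ) ^ n‖ := by
      funext n
      rw [FormalMultilinearSeries.ofScalars_norm, norm_mul, norm_pow, Complex.norm_real,
        Real.norm_of_nonneg (by norm_num : (0:ℝ) ≤ 1/2)]
      norm_num
    rw [h7]
    exact h6.isBigO_one ℝ
  have hball : ∀ (c : ℕ → ℂ), (∀ z : ℂ, ‖z‖ < 1 → HasSum (fun n => c n * z ^ n) (h z)) →
      HasFPowerSeriesAt h (FormalMultilinearSeries.ofScalars ℂ c) 0 := by
    intro c hc
    refine ⟨((1/2 : ℝ≥0) : ℝ≥0∞), hrad c hc, by norm_num, ?_⟩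
    intro y hy
    rw [mem_emetric_ball_zero_iff, enorm_eq_nnnorm, ENNReal.coe_lt_coe] at hy
    have hy1 : ‖y‖ < 1 := by
      have : (‖y‖₊ : ℝ) < ((1/2 : ℝ≥0) : ℝ) := NNReal.coe_lt_coe.2 hy
      rw [coe_nnnorm] at this
      norm_num at this ⊢
      linarith
    rw [zero_add]
    have hfn : (fun n : ℕ => (FormalMultilinearSeries.ofScalars ℂ c n) fun _ => y)
        = fun n => c n * y ^ n := by
      funext n
      rw [FormalMultilinearSeries.ofScalars_apply_eq, smul_eq_mul]
    rw [hfn]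
    exact hc y hy1
  have hpq : FormalMultilinearSeries.ofScalars ℂ e = FormalMultilinearSeries.ofScalars ℂ d :=
    (hball e hesum).eq_formalMultilinearSeries (hball d hdsum)
  have h9 : FormalMultilinearSeries.ofScalars ℂ e 3 = FormalMultilinearSeries.ofScalars ℂ d 3 := by
    rw [hpq]
  have h10 := congrArg (fun M => M (fun _ => (1:ℂ))) h9
  simp only [FormalMultilinearSeries.ofScalars_apply_eq, smul_eq_mul, one_pow, mul_one] at h10
  have he3 : e 3 = 2 * γ 3 := by rw [hedef]; norm_num
  have hd3 : d 3 = (a:ℂ)⁻¹ * ((C:ℝ):ℂ) := by rw [hddef]; norm_num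
  rw [he3, hd3] at h10
  have n2 : (3:ℂ) - (a:ℂ) ≠ 0 := by
    have h' : ((3 - a : ℝ) : ℂ) ≠ 0 := ofReal_ne_zero.2 h3a.ne'
    intro hx; apply h'; push_cast; linear_combination hx
  have hfin : γ 3 = (a:ℂ)⁻¹ * ((C:ℝ):ℂ) / 2 := by linear_combination h10 / 2
  rw [hfin, hCdef]
  push_cast
  rw [div_eq_div_iff (by simpa using haC) (by
    intro hx
    apply n2
    linear_combination hx / 2)]
  field_simp
end
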